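/- Let (Λ, d) be a row-finite, source-free k-graph and f ∈ Λ^{e₁} an edge. Then the delayed graph Λ_D (obtained by replacing each edge g in the saturated set ℰ^{e₁} by two edges g¹, g² through a new vertex v_g, and adding one new edge e_α of degree e_i for each commuting square α of degree e₁ + e_i containing an edge of ℰ^{e₁}, with the equivalence relation ∼_D described by Cases 1–3 of the delay construction) is a row-finite, source-free k-graph. -/

import Mathlib

open scoped Classical

/-- A `k`-colored directed graph: vertices, edges, range, source, and a color
(degree) in `Fin k` for each edge. -/
structure ColoredGraph (k : ℕ) where
  V : Type
  E : Type
  src : E → V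
  rng : E → V
  color : E → Fin k

namespace ColoredGraph

variable {k : ℕ}

/-- A list of edges (listed from the source end) is composable starting at `v`. -/
def Composable (G : ColoredGraph k) : G.V → List G.E → Prop
  | _, [] => True
  | v, e :: l => G.src e = v ∧ Composable G (G.rng e) l

/-- The final vertex reached by following a list of edges starting at `v`. -/
def endV (G : ColoredGraph k) : G.V → List G.E → G.V
  | v, [] => v
  | _, e :: l => endV G (G.rng e) l

/-- A finite path in `G` : an element of the path category `G*`.  The edges are
listed starting from the source (so the first edge of the list is the first,
innermost, edge of the path). -/
structure GPath (G : ColoredGraph k) where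
  src : G.V
  edges : List G.E
  comp : G.Composable src edges

namespace GPath

variable {G : ColoredGraph k}

/-- The range of a path. -/
def rng (p : GPath G) : G.V := G.endV p.src p.edges

/-- The color order of a path: the list of colors of its edges, starting from
the source end. -/
def colors (p : GPath G) : List (Fin k) := p.edges.map G.color

/-- The degree of a path, as an element of `ℕ^k`. -/
def deg (p : GPath G) : Fin k → ℕ := fun i => p.colors.count i

end GPath

theorem composable_append {G : ColoredGraph k} :
    ∀ (l₁ : List G.E) (v : G.V) (l₂ : List G.E),
      G.Composable v l₁ → G.Composable (G.endV v l₁) l₂ → G.Composable v (l₁ ++ l₂) := by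
  intro l₁
  induction l₁ with
  | nil => intro v l₂ _ h₂; exact h₂
  | cons e l ih => intro v l₂ h₁ h₂; exact ⟨h₁.1, ih (G.rng e) l₂ h₁.2 h₂⟩

theorem endV_append {G : ColoredGraph k} :
    ∀ (l₁ : List G.E) (v : G.V) (l₂ : List G.E),
      G.endV v (l₁ ++ l₂) = G.endV (G.endV v l₁) l₂ := by
  intro l₁
  induction l₁ with
  | nil => intro v l₂; rfl
  | cons e l ih => intro v l₂; exact ih (G.rng e) l₂

/-- Concatenation of composable paths. -/
def GPath.append {G : ColoredGraph k} (p q : GPath G) (h : p.rng = q.src) : GPath G :=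
  ⟨p.src, p.edges ++ q.edges,
    composable_append p.edges p.src q.edges p.comp
      (by rw [show G.endV p.src p.edges = q.src from h]; exact q.comp)⟩

/-- The path consisting of a single edge. -/
def edgePath (G : ColoredGraph k) (e : G.E) : GPath G :=
  ⟨G.src e, [e], by exact ⟨rfl, True.intro⟩⟩

/-- The relation preserves range, source and degree. -/
def PreservesRSD (G : ColoredGraph k) (rel : GPath G → GPath G → Prop) : Prop :=
  ∀ p q : GPath G, rel p q → p.src = q.src ∧ p.rng = q.rng ∧ p.deg = q.deg

/-- (KG0): the relation respects concatenation of paths. -/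
def KG0 (G : ColoredGraph k) (rel : GPath G → GPath G → Prop) : Prop :=
  ∀ (p₁ p₂ q₁ q₂ : GPath G) (h : p₁.rng = p₂.src) (h' : q₁.rng = q₂.src),
    rel p₁ q₁ → rel p₂ q₂ → rel (p₁.append p₂ h) (q₁.append q₂ h')

/-- (KG4): for each path and each permutation of its color order there is a
unique equivalent path with the permuted color order. -/
def KG4 (G : ColoredGraph k) (rel : GPath G → GPath G → Prop) : Prop :=
  ∀ (p : GPath G) (c : List (Fin k)), List.Perm c p.colors →
    ∃! q : GPath G, rel q p ∧ q.colors = c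

/-- (KG1): distinct edges are inequivalent. -/
def KG1 (G : ColoredGraph k) (rel : GPath G → GPath G → Prop) : Prop :=
  ∀ e f : G.E, rel (edgePath G e) (edgePath G f) ↔ e = f

/-- (KG2): completeness for bi-colored paths. -/
def KG2 (G : ColoredGraph k) (rel : GPath G → GPath G → Prop) : Prop :=
  ∀ (p : GPath G) (i j : Fin k), p.colors = [i, j] →
    ∃! q : GPath G, rel p q ∧ q.colors = [j, i]

/-- An equivalence relation, together with `KG0` and `KG4`, presents a `k`-graph. -/
def IsKGraphRel (G : ColoredGraph k) (rel : GPath G → GPath G → Prop) : Prop :=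
  Equivalence rel ∧ PreservesRSD G rel ∧ KG0 G rel ∧ KG4 G rel

/-- Every vertex receives an edge of every color. -/
def SourceFree (G : ColoredGraph k) : Prop :=
  ∀ (v : G.V) (i : Fin k), ∃ e : G.E, G.rng e = v ∧ G.color e = i

/-- Every vertex receives finitely many edges of each color. -/
def RowFinite (G : ColoredGraph k) : Prop :=
  ∀ (v : G.V) (i : Fin k), Set.Finite {e : G.E | G.rng e = v ∧ G.color e = i}

/-- `q` is obtained from `p` by replacing the initial (inner) two-edge subpath by
an equivalent two-edge path with transposed colors. -/
def SwapInner (G : ColoredGraph k) (rel : GPath G → GPath G → Prop) (p q : GPath G) : Prop :=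
  ∃ (a b w : GPath G) (ha : a.rng = w.src) (hb : b.rng = w.src),
    a.edges.length = 2 ∧ b.colors = a.colors.reverse ∧ rel a b ∧
    p = a.append w ha ∧ q = b.append w hb

/-- `q` is obtained from `p` by replacing the final (outer) two-edge subpath by
an equivalent two-edge path with transposed colors. -/
def SwapOuter (G : ColoredGraph k) (rel : GPath G → GPath G → Prop) (p q : GPath G) : Prop :=
  ∃ (w a b : GPath G) (ha : w.rng = a.src) (hb : w.rng = b.src),
    a.edges.length = 2 ∧ b.colors = a.colors.reverse ∧ rel a b ∧
    p = w.append a ha ∧ q = w.append b hb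

/-- (KG3): associativity. For a tri-colored path with pairwise distinct colors,
the two standard routes of successive pairwise swaps give the same result. -/
def KG3 (G : ColoredGraph k) (rel : GPath G → GPath G → Prop) : Prop :=
  ∀ (p : GPath G) (i j l : Fin k), i ≠ j → j ≠ l → i ≠ l →
    p.colors = [l, j, i] → ∀ p₁ p₂ p₃ q₁ q₂ q₃ : GPath G,
      SwapOuter G rel p p₁ → SwapInner G rel p₁ p₂ → SwapOuter G rel p₂ p₃ →
      SwapInner G rel p q₁ → SwapOuter G rel q₁ q₂ → SwapInner G rel q₂ q₃ → p₃ = q₃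

/-- `w ≤ v` : there is a path from `v` to `w` (source `v`, range `w`). -/
def LeV (G : ColoredGraph k) (v w : G.V) : Prop :=
  ∃ p : GPath G, p.src = v ∧ p.rng = w

theorem LeV_extend {G : ColoredGraph k} {v : G.V} (e : G.E)
    (h : LeV G v (G.src e)) : LeV G v (G.rng e) := by
  obtain ⟨p, hs, hr⟩ := h
  refine ⟨p.append (edgePath G e) hr, hs, ?_⟩
  show G.endV p.src (p.edges ++ [e]) = G.rng e
  exact (endV_append p.edges p.src [e]).trans rfl

/-- A complete edge from `u` to `w`: exactly one edge of each color, all with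
source `u` and range `w`, closed under commuting squares. -/
def IsCompleteEdge (G : ColoredGraph k) (rel : GPath G → GPath G → Prop)
    (E : Set G.E) (u w : G.V) : Prop :=
  (∀ i : Fin k, ∃! e : G.E, e ∈ E ∧ G.color e = i) ∧
  (∀ e ∈ E, G.src e = u ∧ G.rng e = w) ∧
  (∀ e ∈ E, ∀ a b f' : G.E, ∀ p q : GPath G,
    ((p.edges = [a, e] ∧ q.edges = [b, f']) ∨ (p.edges = [e, a] ∧ q.edges = [f', b])) →
    rel p q → f' ∈ E)

/-- A set `T` of edges of the color of `f` is closed under being opposite to a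
member in a commuting square whose other color differs from that of `f`. -/
def SqClosed (G : ColoredGraph k) (rel : GPath G → GPath G → Prop)
    (f : G.E) (T : Set G.E) : Prop :=
  ∀ g ∈ T, ∀ (e a b : G.E) (p q : GPath G),
    G.color a = G.color b → G.color a ≠ G.color f → G.color e = G.color f →
    ((p.edges = [g, a] ∧ q.edges = [b, e]) ∨ (p.edges = [a, g] ∧ q.edges = [e, b])) →
    rel p q → e ∈ T

/-- The saturation hypothesis used to define the ranges of the new edges of the
delayed graph: every commuting square with inner `e₁`-edge in `S` has its outer
`e₁`-edge in `S`. -/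
def SatHyp (G : ColoredGraph k) (rel : GPath G → GPath G → Prop)
    (f : G.E) (S : Set G.E) : Prop :=
  ∀ g : G.E, g ∈ S → ∀ b : G.E, G.src b = G.rng g → G.color b ≠ G.color f →
    ∃ x : {h : G.E // h ∈ S} × G.E, ∃ p q : GPath G,
      p.edges = [g, b] ∧ q.edges = [x.2, x.1.1] ∧ rel p q

/-- Vertices of the delayed graph: the old vertices, plus one new vertex `v_g`
for each delayed edge `g ∈ S`. -/
abbrev DV (G : ColoredGraph k) (S : Set G.E) := G.V ⊕ {g : G.E // g ∈ S}

/-- Edges of the delayed graph: the old edges not in `S`; two halves `g¹, g²`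
(indexed by `Bool`, `false` for `g¹`) for each `g ∈ S`; and one new edge `e_α`
for each commuting square `α = [b∘g]` with `g ∈ S` and `b` of another color. -/
abbrev DE (G : ColoredGraph k) (f : G.E) (S : Set G.E) :=
  {e : G.E // e ∉ S} ⊕ (({g : G.E // g ∈ S} × Bool) ⊕
    {p : G.E × G.E // p.1 ∈ S ∧ G.src p.2 = G.rng p.1 ∧ G.color p.2 ≠ G.color f})

/-- An old edge of the delayed graph. -/
def DelayOld (G : ColoredGraph k) (f : G.E) (S : Set G.E) (e : G.E) (h : e ∉ S) :
    DE G f S := Sum.inl ⟨e, h⟩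

/-- A half `g¹` (`b = false`) or `g²` (`b = true`) of a delayed edge `g ∈ S`. -/
def DelayHalf (G : ColoredGraph k) (f : G.E) (S : Set G.E) (g : G.E) (hg : g ∈ S)
    (b : Bool) : DE G f S := Sum.inr (Sum.inl (⟨g, hg⟩, b))

/-- The new edge `e_α` for the commuting square `α = [b∘g]`. -/
def DelayNew (G : ColoredGraph k) (f : G.E) (S : Set G.E) (g b : G.E)
    (h : g ∈ S ∧ G.src b = G.rng g ∧ G.color b ≠ G.color f) : DE G f S :=
  Sum.inr (Sum.inr ⟨(g, b), h⟩)

/-- The delayed colored graph: each `g ∈ S` is replaced by `g¹` (from `s(g)` to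
the new vertex `v_g`) followed by `g²` (from `v_g` to `r(g)`), and the new edge
`e_α` for `α = [b∘g]` runs from `v_g` to `v_h`, where `h` is the outer
`e₁`-edge of the square `α` (obtained from the saturation hypothesis). -/
noncomputable def DelayGraph (G : ColoredGraph k) (rel : GPath G → GPath G → Prop)
    (f : G.E) (S : Set G.E) (hsat : SatHyp G rel f S) : ColoredGraph k where
  V := DV G S
  E := DE G f S
  src := fun ε => match ε with
    | Sum.inl e => Sum.inl (G.src e.1)
    | Sum.inr (Sum.inl (g, b)) => if b then Sum.inr g else Sum.inl (G.src g.1)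
    | Sum.inr (Sum.inr x) => Sum.inr ⟨x.1.1, x.2.1⟩
  rng := fun ε => match ε with
    | Sum.inl e => Sum.inl (G.rng e.1)
    | Sum.inr (Sum.inl (g, b)) => if b then Sum.inl (G.rng g.1) else Sum.inr g
    | Sum.inr (Sum.inr x) =>
        Sum.inr (Classical.choose (hsat x.1.1 x.2.1 x.1.2 x.2.2.1 x.2.2.2)).1
  color := fun ε => match ε with
    | Sum.inl e => G.color e.1
    | Sum.inr (Sum.inl (g, _)) => G.color g.1
    | Sum.inr (Sum.inr x) => G.color x.1.2

/-- The equivalence relation on paths of the delayed graph: the smallest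
equivalence relation containing the base relations of Cases 1–3 of the delay
construction and closed under concatenation (KG0).

* `old` (Case 1): paths consisting of old edges are related when their parents
  are related in the original graph.
* `splitTop` (Case 2a): if `b∘g ∼ h∘a` in `Λ` with `g, h ∈ S`, then
  `b ∘ g² ∼_D h² ∘ e_{[b∘g]}`.
* `splitBottom` (Case 2b): in the same situation, `e_{[b∘g]} ∘ g¹ ∼_D h¹ ∘ a`.
* `cube` (Case 3): `e_β ∘ e_α ∼_D e_γ ∘ e_δ` when the squares
  `α = [a∘g₀], β = [b∘g₁], δ = [b'∘g₀], γ = [a'∘g₃]` form a 3-cube over the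
  common edge `g₀ ∈ S`, i.e. the rectangles `b∘a∘g₀` and `a'∘b'∘g₀` are
  equivalent in `Λ` and `g₁` (resp. `g₃`) is the outer `e₁`-edge of the square
  on `a∘g₀` (resp. `b'∘g₀`). -/
inductive DelayRel (G : ColoredGraph k) (rel : GPath G → GPath G → Prop)
    (f : G.E) (S : Set G.E) (hsat : SatHyp G rel f S) :
    GPath (DelayGraph G rel f S hsat) → GPath (DelayGraph G rel f S hsat) → Prop
  | old (p q : GPath (DelayGraph G rel f S hsat)) (p' q' : GPath G)
      (hp : List.Forall₂ (fun ε e => ∃ h : e ∉ S, ε = DelayOld G f S e h) p.edges p'.edges)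
      (hps : p.src = Sum.inl p'.src)
      (hq : List.Forall₂ (fun ε e => ∃ h : e ∉ S, ε = DelayOld G f S e h) q.edges q'.edges)
      (hqs : q.src = Sum.inl q'.src)
      (hrel : rel p' q') : DelayRel G rel f S hsat p q
  | splitTop (p q : GPath (DelayGraph G rel f S hsat)) (g h a b : G.E)
      (hg : g ∈ S) (hh : h ∈ S) (hb : b ∉ S)
      (hcond : g ∈ S ∧ G.src b = G.rng g ∧ G.color b ≠ G.color f)
      (p' q' : GPath G)
      (hp' : p'.edges = [g, b]) (hq' : q'.edges = [a, h]) (hrel : rel p' q')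
      (hp : p.edges = [DelayHalf G f S g hg true, DelayOld G f S b hb])
      (hq : q.edges = [DelayNew G f S g b hcond, DelayHalf G f S h hh true]) :
      DelayRel G rel f S hsat p q
  | splitBottom (p q : GPath (DelayGraph G rel f S hsat)) (g h a b : G.E)
      (hg : g ∈ S) (hh : h ∈ S) (ha : a ∉ S)
      (hcond : g ∈ S ∧ G.src b = G.rng g ∧ G.color b ≠ G.color f)
      (p' q' : GPath G)
      (hp' : p'.edges = [g, b]) (hq' : q'.edges = [a, h]) (hrel : rel p' q')
      (hp : p.edges = [DelayHalf G f S g hg false, DelayNew G f S g b hcond])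
      (hq : q.edges = [DelayOld G f S a ha, DelayHalf G f S h hh false]) :
      DelayRel G rel f S hsat p q
  | cube (p q : GPath (DelayGraph G rel f S hsat)) (g₀ g₁ g₃ a b a' b' a₁ b₁ : G.E)
      (hg₀ : g₀ ∈ S) (hg₁ : g₁ ∈ S) (hg₃ : g₃ ∈ S)
      (hc₁ : g₀ ∈ S ∧ G.src a = G.rng g₀ ∧ G.color a ≠ G.color f)
      (hc₂ : g₁ ∈ S ∧ G.src b = G.rng g₁ ∧ G.color b ≠ G.color f)
      (hc₃ : g₀ ∈ S ∧ G.src b' = G.rng g₀ ∧ G.color b' ≠ G.color f)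
      (hc₄ : g₃ ∈ S ∧ G.src a' = G.rng g₃ ∧ G.color a' ≠ G.color f)
      (P Q u u' w w' : GPath G)
      (hP : P.edges = [g₀, a, b]) (hQ : Q.edges = [g₀, b', a']) (hPQ : rel P Q)
      (hu : u.edges = [g₀, a]) (hu' : u'.edges = [a₁, g₁]) (huu : rel u u')
      (hw : w.edges = [g₀, b']) (hw' : w'.edges = [b₁, g₃]) (hww : rel w w')
      (hp : p.edges = [DelayNew G f S g₀ a hc₁, DelayNew G f S g₁ b hc₂])
      (hq : q.edges = [DelayNew G f S g₀ b' hc₃, DelayNew G f S g₃ a' hc₄]) :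
      DelayRel G rel f S hsat p q
  | refl (p : GPath (DelayGraph G rel f S hsat)) : DelayRel G rel f S hsat p p
  | symm (p q : GPath (DelayGraph G rel f S hsat)) :
      DelayRel G rel f S hsat p q → DelayRel G rel f S hsat q p
  | trans (p q r : GPath (DelayGraph G rel f S hsat)) :
      DelayRel G rel f S hsat p q → DelayRel G rel f S hsat q r →
      DelayRel G rel f S hsat p r
  | concat (p₁ p₂ q₁ q₂ : GPath (DelayGraph G rel f S hsat))
      (h : p₁.rng = p₂.src) (h' : q₁.rng = q₂.src) :
      DelayRel G rel f S hsat p₁ q₁ → DelayRel G rel f S hsat p₂ q₂ →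
      DelayRel G rel f S hsat (p₁.append p₂ h) (q₁.append q₂ h')

section DelayProof

variable {k : ℕ} {G : ColoredGraph k} {rel : GPath G → GPath G → Prop}

theorem GPath.ext' {H : ColoredGraph k} {p q : GPath H} (hs : p.src = q.src)
    (he : p.edges = q.edges) : p = q := by
  cases p; cases q; cases hs; cases he; rfl

theorem composable_left {H : ColoredGraph k} :
    ∀ (l₁ : List H.E) (s : H.V) (l₂ : List H.E),
      H.Composable s (l₁ ++ l₂) → H.Composable s l₁ := by
  intro l₁
  induction l₁ with
  | nil => intro s l₂ _; trivial
  | cons e l ih => intro s l₂ h; exact ⟨h.1, ih _ _ h.2⟩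

theorem composable_right {H : ColoredGraph k} :
    ∀ (l₁ : List H.E) (s : H.V) (l₂ : List H.E), H.Composable s (l₁ ++ l₂) →
      H.Composable (H.endV s l₁) l₂ := by
  intro l₁
  induction l₁ with
  | nil => intro s l₂ h; exact h
  | cons e l ih => intro s l₂ h; exact ih _ _ h.2

theorem rng_append {H : ColoredGraph k} (p q : GPath H) (h : p.rng = q.src) :
    (p.append q h).rng = q.rng := by
  show H.endV p.src (p.edges ++ q.edges) = q.rng
  rw [endV_append]
  show H.endV p.rng q.edges = q.rng
  rw [h]; rfl

theorem colors_append {H : ColoredGraph k} (p q : GPath H) (h : p.rng = q.src) :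
    (p.append q h).colors = p.colors ++ q.colors := by
  simp [GPath.append, GPath.colors]

theorem cons_decomp {H : ColoredGraph k} (s : H.V) (e : H.E) (l : List H.E)
    (h : H.Composable s (e :: l)) :
    (⟨s, e :: l, h⟩ : GPath H)
      = (edgePath H e).append ⟨H.rng e, l, h.2⟩ rfl :=
  GPath.ext' h.1.symm rfl

theorem snoc_decomp {H : ColoredGraph k} (s : H.V) (u : List H.E) (h : H.E)
    (c : H.Composable s (u ++ [h])) :
    (⟨s, u ++ [h], c⟩ : GPath H)
      = (⟨s, u, composable_left u s [h] c⟩ : GPath H).append (edgePath H h)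
          (composable_right u s [h] c).1.symm :=
  GPath.ext' rfl rfl

theorem rel_perm (hP : PreservesRSD G rel) {p q : GPath G} (h : rel p q) :
    p.colors.Perm q.colors :=
  List.perm_iff_count.2 fun a => congrFun (hP p q h).2.2 a

theorem rel_colors_eq (hE : Equivalence rel) (hU : KG4 G rel) {p q : GPath G}
    (h : rel p q) (hc : p.colors = q.colors) : p = q := by
  obtain ⟨r, -, hun⟩ := hU q q.colors (List.Perm.refl _)
  exact (hun p ⟨h, hc⟩).trans (hun q ⟨hE.refl q, rfl⟩).symm

theorem rel_congr {p q p' q' : GPath G} (h : rel p q) (h1 : p = p') (h2 : q = q') :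
    rel p' q' := h1 ▸ h2 ▸ h

theorem firstEdge (hE : Equivalence rel) (hP : PreservesRSD G rel) (hC : KG0 G rel)
    (hU : KG4 G rel) {s : G.V} {e e' : G.E} {l m : List G.E}
    {cl : G.Composable s (e :: l)} {cm : G.Composable s (e' :: m)}
    (hr : rel ⟨s, e :: l, cl⟩ ⟨s, e' :: m, cm⟩) (hc : G.color e = G.color e') :
    e = e' ∧ rel ⟨G.rng e, l, cl.2⟩ ⟨G.rng e', m, cm.2⟩ := by
  have hperm : (G.color e :: l.map G.color).Perm (G.color e' :: m.map G.color) :=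
    rel_perm hP hr
  have htail : (m.map G.color).Perm (l.map G.color) := by
    rw [List.perm_iff_count]
    intro a
    have h1 := List.perm_iff_count.1 hperm a
    rw [hc] at h1
    simp [List.count_cons] at h1
    omega
  obtain ⟨u', ⟨hu'rel, hu'col⟩, -⟩ := hU ⟨G.rng e, l, cl.2⟩ (m.map G.color) htail
  have hsrc : u'.src = G.rng e := (hP _ _ hu'rel).1
  have hr1 : rel ((edgePath G e).append u' hsrc.symm) ⟨s, e :: l, cl⟩ := by
    rw [cons_decomp s e l cl]
    exact hC _ _ _ _ _ _ (hE.refl (edgePath G e)) hu'rel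
  have hpermc : (G.color e' :: m.map G.color).Perm
      ((⟨s, e :: l, cl⟩ : GPath G).colors) := by
    show (G.color e' :: m.map G.color).Perm (G.color e :: l.map G.color)
    rw [← hc]
    exact htail.cons _
  obtain ⟨r, -, hun⟩ := hU ⟨s, e :: l, cl⟩ (G.color e' :: m.map G.color) hpermc
  have hcolr : ((edgePath G e).append u' hsrc.symm).colors = G.color e :: u'.colors := by
    simp [GPath.append, GPath.colors, edgePath]
  have h1 : ((edgePath G e).append u' hsrc.symm) = (⟨s, e' :: m, cm⟩ : GPath G) := by
    refine (hun _ ⟨hr1, ?_⟩).trans (hun _ ⟨hE.symm hr, rfl⟩).symm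
    rw [hcolr, hc, hu'col]
  have hedges : e :: u'.edges = e' :: m := congrArg GPath.edges h1
  have he : e = e' := (List.cons.injEq _ _ _ _ ▸ hedges).1
  have hm : u'.edges = m := (List.cons.injEq _ _ _ _ ▸ hedges).2
  have hu'eq : u' = (⟨G.rng e', m, cm.2⟩ : GPath G) :=
    GPath.ext' (hsrc.trans (by rw [he])) hm
  refine ⟨he, ?_⟩
  rw [hu'eq] at hu'rel
  exact hE.symm hu'rel

theorem lastEdge (hE : Equivalence rel) (hP : PreservesRSD G rel) (hC : KG0 G rel)
    (hU : KG4 G rel) {s : G.V} {u w : List G.E} {h h' : G.E}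
    {cu : G.Composable s (u ++ [h])} {cw : G.Composable s (w ++ [h'])}
    (hr : rel ⟨s, u ++ [h], cu⟩ ⟨s, w ++ [h'], cw⟩) (hc : G.color h = G.color h') :
    h = h' ∧ rel ⟨s, u, composable_left u s [h] cu⟩ ⟨s, w, composable_left w s [h'] cw⟩ := by
  have hperm := rel_perm hP hr
  have hcolbig : ((⟨s, u ++ [h], cu⟩ : GPath G)).colors = u.map G.color ++ [G.color h] := by
    simp [GPath.colors]
  have hcolbig' : ((⟨s, w ++ [h'], cw⟩ : GPath G)).colors = w.map G.color ++ [G.color h'] := by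
    simp [GPath.colors]
  have htail : (w.map G.color).Perm (u.map G.color) := by
    rw [List.perm_iff_count]
    intro a
    have h1 := List.perm_iff_count.1 hperm a
    rw [hcolbig, hcolbig', hc] at h1
    simp [List.count_append] at h1
    omega
  obtain ⟨u', ⟨hu'rel, hu'col⟩, -⟩ := hU ⟨s, u, composable_left u s [h] cu⟩
    (w.map G.color) htail
  have hsrc : u'.src = s := (hP _ _ hu'rel).1
  have hrngu : (⟨s, u, composable_left u s [h] cu⟩ : GPath G).rng = G.src h :=
    (composable_right u s [h] cu).1.symm
  have glue' : u'.rng = G.src h := ((hP _ _ hu'rel).2.1).trans hrngu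
  have hr1 : rel (u'.append (edgePath G h) glue') ⟨s, u ++ [h], cu⟩ := by
    rw [snoc_decomp s u h cu]
    exact hC _ _ _ _ _ _ hu'rel (hE.refl (edgePath G h))
  have hpermc : (w.map G.color ++ [G.color h]).Perm
      ((⟨s, u ++ [h], cu⟩ : GPath G).colors) := by
    rw [hcolbig]
    exact htail.append_right _
  obtain ⟨r, -, hun⟩ := hU ⟨s, u ++ [h], cu⟩ (w.map G.color ++ [G.color h]) hpermc
  have hcolr : (u'.append (edgePath G h) glue').colors = u'.colors ++ [G.color h] := by
    simp [GPath.append, GPath.colors, edgePath]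
  have h1 : (u'.append (edgePath G h) glue') = (⟨s, w ++ [h'], cw⟩ : GPath G) := by
    refine (hun _ ⟨hr1, ?_⟩).trans (hun _ ⟨hE.symm hr, ?_⟩).symm
    · rw [hcolr, hu'col]
    · rw [hcolbig', hc]
  have hedges : u'.edges ++ [h] = w ++ [h'] := congrArg GPath.edges h1
  have hlen : u'.edges.length = w.length := by
    have := congrArg List.length hu'col
    simpa [GPath.colors] using this
  obtain ⟨hw1, hw2⟩ := List.append_inj hedges hlen
  have hh : h = h' := by simpa using hw2
  refine ⟨hh, ?_⟩
  have hu'eq : u' = (⟨s, w, composable_left w s [h'] cw⟩ : GPath G) :=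
    GPath.ext' hsrc hw1
  rw [hu'eq] at hu'rel
  exact hE.symm hu'rel

theorem swap2 (hP : PreservesRSD G rel) (hU : KG4 G rel) {s : G.V} {e₁ e₂ : G.E}
    (c : G.Composable s [e₁, e₂]) :
    ∃ (f₁ f₂ : G.E) (c' : G.Composable s [f₁, f₂]),
      rel ⟨s, [f₁, f₂], c'⟩ ⟨s, [e₁, e₂], c⟩ ∧
      G.color f₁ = G.color e₂ ∧ G.color f₂ = G.color e₁ := by
  obtain ⟨q, ⟨hqrel, hqcol⟩, -⟩ := hU ⟨s, [e₁, e₂], c⟩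
    [G.color e₂, G.color e₁] (List.Perm.swap _ _ _)
  obtain ⟨qs, qe, qc⟩ := q
  have hqs : qs = s := (hP _ _ hqrel).1
  subst hqs
  rcases qe with _ | ⟨f₁, _ | ⟨f₂, _ | ⟨f₃, t⟩⟩⟩
  · simp [GPath.colors] at hqcol
  · simp [GPath.colors] at hqcol
  · have hc12 : G.color f₁ = G.color e₂ ∧ G.color f₂ = G.color e₁ := by
      simpa [GPath.colors] using hqcol
    exact ⟨f₁, f₂, qc, hqrel, hc12.1, hc12.2⟩
  · simp [GPath.colors] at hqcol

section Opp

variable {f : G.E} {S : Set G.E}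

/-- The opposite corner data of a commuting square on `g ∈ S` and `b`. -/
noncomputable def opp (hsat : SatHyp G rel f S) (g : G.E) (hg : g ∈ S) (b : G.E)
    (h1 : G.src b = G.rng g) (h2 : G.color b ≠ G.color f) : {h : G.E // h ∈ S} × G.E :=
  Classical.choose (hsat g hg b h1 h2)

theorem opp_spec (hP : PreservesRSD G rel) (hsat : SatHyp G rel f S) (g : G.E)
    (hg : g ∈ S) (b : G.E) (h1 : G.src b = G.rng g) (h2 : G.color b ≠ G.color f) :
    ∃ (cp : G.Composable (G.src g) [g, b])
      (cq : G.Composable (G.src g)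
        [(opp hsat g hg b h1 h2).2, (opp hsat g hg b h1 h2).1.1]),
      rel ⟨G.src g, [g, b], cp⟩
        ⟨G.src g, [(opp hsat g hg b h1 h2).2, (opp hsat g hg b h1 h2).1.1], cq⟩ := by
  unfold opp
  obtain ⟨p, q, hp, hq, hr⟩ := Classical.choose_spec (hsat g hg b h1 h2)
  have hps : p.src = G.src g := by
    have c := p.comp
    rw [hp] at c
    exact c.1.symm
  have hqs : q.src = G.src g := ((hP _ _ hr).1).symm.trans hps
  have cp : G.Composable (G.src g) [g, b] := by rw [← hps, ← hp]; exact p.comp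
  have cq : G.Composable (G.src g)
      [(Classical.choose (hsat g hg b h1 h2)).2,
       (Classical.choose (hsat g hg b h1 h2)).1.1] := by
    rw [← hqs, ← hq]; exact q.comp
  have hpeq : p = ⟨G.src g, [g, b], cp⟩ := GPath.ext' hps hp
  have hqeq : q = ⟨G.src g, [(Classical.choose (hsat g hg b h1 h2)).2,
      (Classical.choose (hsat g hg b h1 h2)).1.1], cq⟩ := GPath.ext' hqs hq
  rw [hpeq, hqeq] at hr
  exact ⟨cp, cq, hr⟩

theorem sq_color (hP : PreservesRSD G rel) (hScol : ∀ g ∈ S, G.color g = G.color f)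
    {s : G.V} {g b a h : G.E} (hg : g ∈ S) (hh : h ∈ S)
    {cp : G.Composable s [g, b]} {cq : G.Composable s [a, h]}
    (hr : rel ⟨s, [g, b], cp⟩ ⟨s, [a, h], cq⟩) : G.color a = G.color b := by
  have hperm : ([G.color g, G.color b] : List (Fin k)).Perm [G.color a, G.color h] := by
    simpa [GPath.colors] using rel_perm hP hr
  rw [hScol g hg, hScol h hh] at hperm
  have h2 := (hperm.trans (List.Perm.swap _ _ _)).cons_inv
  have := List.perm_singleton.1 h2
  simpa using this.symm

theorem opp_color (hP : PreservesRSD G rel) (hScol : ∀ g ∈ S, G.color g = G.color f)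
    (hsat : SatHyp G rel f S) (g : G.E) (hg : g ∈ S) (b : G.E)
    (h1 : G.src b = G.rng g) (h2 : G.color b ≠ G.color f) :
    G.color (opp hsat g hg b h1 h2).2 = G.color b := by
  obtain ⟨cp, cq, hr⟩ := opp_spec hP hsat g hg b h1 h2
  exact sq_color hP hScol hg (opp hsat g hg b h1 h2).1.2 hr

theorem opp_src (hP : PreservesRSD G rel) (hsat : SatHyp G rel f S) (g : G.E)
    (hg : g ∈ S) (b : G.E) (h1 : G.src b = G.rng g) (h2 : G.color b ≠ G.color f) :
    G.src (opp hsat g hg b h1 h2).2 = G.src g ∧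
    G.src (opp hsat g hg b h1 h2).1.1 = G.rng (opp hsat g hg b h1 h2).2 ∧
    G.rng (opp hsat g hg b h1 h2).1.1 = G.rng b := by
  obtain ⟨cp, cq, hr⟩ := opp_spec hP hsat g hg b h1 h2
  exact ⟨cq.1, cq.2.1, ((hP _ _ hr).2.1).symm⟩

theorem opp_unique (hE : Equivalence rel) (hP : PreservesRSD G rel)
    (hScol : ∀ g ∈ S, G.color g = G.color f) (hU : KG4 G rel)
    (hsat : SatHyp G rel f S) (g : G.E) (hg : g ∈ S) (b : G.E)
    (h1 : G.src b = G.rng g) (h2 : G.color b ≠ G.color f) {a h : G.E} (hh : h ∈ S)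
    {s : G.V} {cp' : G.Composable s [g, b]} {cq' : G.Composable s [a, h]}
    (hr : rel ⟨s, [g, b], cp'⟩ ⟨s, [a, h], cq'⟩) :
    a = (opp hsat g hg b h1 h2).2 ∧ h = (opp hsat g hg b h1 h2).1.1 := by
  have hs : s = G.src g := cp'.1.symm
  subst hs
  obtain ⟨cp, cq, hr2⟩ := opp_spec hP hsat g hg b h1 h2
  have hca : G.color a = G.color b := sq_color hP hScol hg hh hr
  have hcA : G.color (opp hsat g hg b h1 h2).2 = G.color b :=
    opp_color hP hScol hsat g hg b h1 h2
  have hperm : ([G.color b, G.color f] : List (Fin k)).Perm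
      ((⟨G.src g, [g, b], cp'⟩ : GPath G).colors) := by
    have : (⟨G.src g, [g, b], cp'⟩ : GPath G).colors = [G.color f, G.color b] := by
      simp [GPath.colors, hScol g hg]
    rw [this]
    exact List.Perm.swap _ _ _
  obtain ⟨r, -, hun⟩ := hU ⟨G.src g, [g, b], cp'⟩ [G.color b, G.color f] hperm
  have hp1 : (⟨G.src g, [a, h], cq'⟩ : GPath G) = ⟨G.src g,
      [(opp hsat g hg b h1 h2).2, (opp hsat g hg b h1 h2).1.1], cq⟩ := by
    refine (hun _ ⟨hE.symm hr, ?_⟩).trans (hun _ ⟨hE.symm hr2, ?_⟩).symm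
    · simp [GPath.colors, hca, hScol h hh]
    · simp [GPath.colors, hcA, hScol _ (opp hsat g hg b h1 h2).1.2]
  have := congrArg GPath.edges hp1
  simp at this
  exact this

end Opp

section DSimp

variable {f : G.E} {S : Set G.E} (hsat : SatHyp G rel f S)

@[simp] theorem D_src_old (e : G.E) (h : e ∉ S) :
    (DelayGraph G rel f S hsat).src (DelayOld G f S e h) = Sum.inl (G.src e) := rfl

@[simp] theorem D_rng_old (e : G.E) (h : e ∉ S) :
    (DelayGraph G rel f S hsat).rng (DelayOld G f S e h) = Sum.inl (G.rng e) := rfl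

@[simp] theorem D_color_old (e : G.E) (h : e ∉ S) :
    (DelayGraph G rel f S hsat).color (DelayOld G f S e h) = G.color e := rfl

@[simp] theorem D_src_half_false (g : G.E) (hg : g ∈ S) :
    (DelayGraph G rel f S hsat).src (DelayHalf G f S g hg false) = Sum.inl (G.src g) := rfl

@[simp] theorem D_rng_half_false (g : G.E) (hg : g ∈ S) :
    (DelayGraph G rel f S hsat).rng (DelayHalf G f S g hg false) = Sum.inr ⟨g, hg⟩ := rfl

@[simp] theorem D_src_half_true (g : G.E) (hg : g ∈ S) :
    (DelayGraph G rel f S hsat).src (DelayHalf G f S g hg true) = Sum.inr ⟨g, hg⟩ := rfl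

@[simp] theorem D_rng_half_true (g : G.E) (hg : g ∈ S) :
    (DelayGraph G rel f S hsat).rng (DelayHalf G f S g hg true) = Sum.inl (G.rng g) := rfl

@[simp] theorem D_color_half (g : G.E) (hg : g ∈ S) (bb : Bool) :
    (DelayGraph G rel f S hsat).color (DelayHalf G f S g hg bb) = G.color g := rfl

@[simp] theorem D_src_new (g b : G.E) (h : g ∈ S ∧ G.src b = G.rng g ∧ G.color b ≠ G.color f) :
    (DelayGraph G rel f S hsat).src (DelayNew G f S g b h) = Sum.inr ⟨g, h.1⟩ := rfl

@[simp] theorem D_rng_new (g b : G.E) (h : g ∈ S ∧ G.src b = G.rng g ∧ G.color b ≠ G.color f) :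
    (DelayGraph G rel f S hsat).rng (DelayNew G f S g b h)
      = Sum.inr (opp hsat g h.1 b h.2.1 h.2.2).1 := rfl

@[simp] theorem D_color_new (g b : G.E)
    (h : g ∈ S ∧ G.src b = G.rng g ∧ G.color b ≠ G.color f) :
    (DelayGraph G rel f S hsat).color (DelayNew G f S g b h) = G.color b := rfl

@[simp] theorem D_src_inl (e : {e : G.E // e ∉ S}) :
    (DelayGraph G rel f S hsat).src (Sum.inl e) = Sum.inl (G.src e.1) := rfl

@[simp] theorem D_rng_inl (e : {e : G.E // e ∉ S}) :
    (DelayGraph G rel f S hsat).rng (Sum.inl e) = Sum.inl (G.rng e.1) := rfl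

@[simp] theorem D_src_inrT (g : {g : G.E // g ∈ S}) :
    (DelayGraph G rel f S hsat).src (Sum.inr (Sum.inl (g, true))) = Sum.inr g := rfl

@[simp] theorem D_src_inrF (g : {g : G.E // g ∈ S}) :
    (DelayGraph G rel f S hsat).src (Sum.inr (Sum.inl (g, false))) = Sum.inl (G.src g.1) := rfl

@[simp] theorem D_rng_inrT (g : {g : G.E // g ∈ S}) :
    (DelayGraph G rel f S hsat).rng (Sum.inr (Sum.inl (g, true))) = Sum.inl (G.rng g.1) := rfl

@[simp] theorem D_rng_inrF (g : {g : G.E // g ∈ S}) :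
    (DelayGraph G rel f S hsat).rng (Sum.inr (Sum.inl (g, false))) = Sum.inr g := rfl

@[simp] theorem D_src_inrN
    (x : {p : G.E × G.E // p.1 ∈ S ∧ G.src p.2 = G.rng p.1 ∧ G.color p.2 ≠ G.color f}) :
    (DelayGraph G rel f S hsat).src (Sum.inr (Sum.inr x)) = Sum.inr ⟨x.1.1, x.2.1⟩ := rfl

@[simp] theorem D_rng_inrN
    (x : {p : G.E × G.E // p.1 ∈ S ∧ G.src p.2 = G.rng p.1 ∧ G.color p.2 ≠ G.color f}) :
    (DelayGraph G rel f S hsat).rng (Sum.inr (Sum.inr x))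
      = Sum.inr (opp hsat x.1.1 x.2.1 x.1.2 x.2.2.1 x.2.2.2).1 := rfl

@[simp] theorem D_color_inl (e : {e : G.E // e ∉ S}) :
    (DelayGraph G rel f S hsat).color (Sum.inl e) = G.color e.1 := rfl

@[simp] theorem D_color_inrH (g : {g : G.E // g ∈ S}) (bb : Bool) :
    (DelayGraph G rel f S hsat).color (Sum.inr (Sum.inl (g, bb))) = G.color g.1 := rfl

@[simp] theorem D_color_inrN
    (x : {p : G.E × G.E // p.1 ∈ S ∧ G.src p.2 = G.rng p.1 ∧ G.color p.2 ≠ G.color f}) :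
    (DelayGraph G rel f S hsat).color (Sum.inr (Sum.inr x)) = G.color x.1.2 := rfl

@[simp] theorem DL_map_cons_DD {β : Type*} (F : (DE G f S) → β) (x : (DE G f S)) (l : List (DE G f S)) :
    @List.map (DE G f S) β F (@List.cons (DE G f S) x l) = F x :: @List.map (DE G f S) β F l := rfl

@[simp] theorem DL_map_nil_DD {β : Type*} (F : (DE G f S) → β) :
    @List.map (DE G f S) β F (@List.nil (DE G f S)) = [] := rfl

@[simp] theorem DL_flatMap_cons_DD {β : Type*} (F : (DE G f S) → List β) (x : (DE G f S)) (l : List (DE G f S)) :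
    @List.flatMap (DE G f S) β F (@List.cons (DE G f S) x l) = F x ++ @List.flatMap (DE G f S) β F l := rfl

@[simp] theorem DL_flatMap_nil_DD {β : Type*} (F : (DE G f S) → List β) :
    @List.flatMap (DE G f S) β F (@List.nil (DE G f S)) = [] := rfl

@[simp] theorem DL_flatMap_append_DD {β : Type*} (F : (DE G f S) → List β) (l l' : List (DE G f S)) :
    @List.flatMap (DE G f S) β F (@HAppend.hAppend (List (DE G f S)) (List (DE G f S)) (List (DE G f S)) instHAppendOfAppend l l') = @List.flatMap (DE G f S) β F l ++ @List.flatMap (DE G f S) β F l' := List.flatMap_append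

@[simp] theorem DL_map_cons_DG {β : Type*} (F : (DE G f S) → β) (x : (DelayGraph G rel f S hsat).E) (l : List (DelayGraph G rel f S hsat).E) :
    @List.map (DE G f S) β F (@List.cons (DelayGraph G rel f S hsat).E x l) = F x :: @List.map (DE G f S) β F l := rfl

@[simp] theorem DL_map_nil_DG {β : Type*} (F : (DE G f S) → β) :
    @List.map (DE G f S) β F (@List.nil (DelayGraph G rel f S hsat).E) = [] := rfl

@[simp] theorem DL_flatMap_cons_DG {β : Type*} (F : (DE G f S) → List β) (x : (DelayGraph G rel f S hsat).E) (l : List (DelayGraph G rel f S hsat).E) :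
    @List.flatMap (DE G f S) β F (@List.cons (DelayGraph G rel f S hsat).E x l) = F x ++ @List.flatMap (DE G f S) β F l := rfl

@[simp] theorem DL_flatMap_nil_DG {β : Type*} (F : (DE G f S) → List β) :
    @List.flatMap (DE G f S) β F (@List.nil (DelayGraph G rel f S hsat).E) = [] := rfl

@[simp] theorem DL_flatMap_append_DG {β : Type*} (F : (DE G f S) → List β) (l l' : List (DelayGraph G rel f S hsat).E) :
    @List.flatMap (DE G f S) β F (@HAppend.hAppend (List (DelayGraph G rel f S hsat).E) (List (DelayGraph G rel f S hsat).E) (List (DelayGraph G rel f S hsat).E) instHAppendOfAppend l l') = @List.flatMap (DE G f S) β F l ++ @List.flatMap (DE G f S) β F l' := List.flatMap_append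

@[simp] theorem DL_map_cons_GD {β : Type*} (F : (DelayGraph G rel f S hsat).E → β) (x : (DE G f S)) (l : List (DE G f S)) :
    @List.map (DelayGraph G rel f S hsat).E β F (@List.cons (DE G f S) x l) = F x :: @List.map (DelayGraph G rel f S hsat).E β F l := rfl

@[simp] theorem DL_map_nil_GD {β : Type*} (F : (DelayGraph G rel f S hsat).E → β) :
    @List.map (DelayGraph G rel f S hsat).E β F (@List.nil (DE G f S)) = [] := rfl

@[simp] theorem DL_flatMap_cons_GD {β : Type*} (F : (DelayGraph G rel f S hsat).E → List β) (x : (DE G f S)) (l : List (DE G f S)) :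
    @List.flatMap (DelayGraph G rel f S hsat).E β F (@List.cons (DE G f S) x l) = F x ++ @List.flatMap (DelayGraph G rel f S hsat).E β F l := rfl

@[simp] theorem DL_flatMap_nil_GD {β : Type*} (F : (DelayGraph G rel f S hsat).E → List β) :
    @List.flatMap (DelayGraph G rel f S hsat).E β F (@List.nil (DE G f S)) = [] := rfl

@[simp] theorem DL_flatMap_append_GD {β : Type*} (F : (DelayGraph G rel f S hsat).E → List β) (l l' : List (DE G f S)) :
    @List.flatMap (DelayGraph G rel f S hsat).E β F (@HAppend.hAppend (List (DE G f S)) (List (DE G f S)) (List (DE G f S)) instHAppendOfAppend l l') = @List.flatMap (DelayGraph G rel f S hsat).E β F l ++ @List.flatMap (DelayGraph G rel f S hsat).E β F l' := List.flatMap_append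

@[simp] theorem DL_map_cons_GG {β : Type*} (F : (DelayGraph G rel f S hsat).E → β) (x : (DelayGraph G rel f S hsat).E) (l : List (DelayGraph G rel f S hsat).E) :
    @List.map (DelayGraph G rel f S hsat).E β F (@List.cons (DelayGraph G rel f S hsat).E x l) = F x :: @List.map (DelayGraph G rel f S hsat).E β F l := rfl

@[simp] theorem DL_map_nil_GG {β : Type*} (F : (DelayGraph G rel f S hsat).E → β) :
    @List.map (DelayGraph G rel f S hsat).E β F (@List.nil (DelayGraph G rel f S hsat).E) = [] := rfl

@[simp] theorem DL_flatMap_cons_GG {β : Type*} (F : (DelayGraph G rel f S hsat).E → List β) (x : (DelayGraph G rel f S hsat).E) (l : List (DelayGraph G rel f S hsat).E) :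
    @List.flatMap (DelayGraph G rel f S hsat).E β F (@List.cons (DelayGraph G rel f S hsat).E x l) = F x ++ @List.flatMap (DelayGraph G rel f S hsat).E β F l := rfl

@[simp] theorem DL_flatMap_nil_GG {β : Type*} (F : (DelayGraph G rel f S hsat).E → List β) :
    @List.flatMap (DelayGraph G rel f S hsat).E β F (@List.nil (DelayGraph G rel f S hsat).E) = [] := rfl

@[simp] theorem DL_flatMap_append_GG {β : Type*} (F : (DelayGraph G rel f S hsat).E → List β) (l l' : List (DelayGraph G rel f S hsat).E) :
    @List.flatMap (DelayGraph G rel f S hsat).E β F (@HAppend.hAppend (List (DelayGraph G rel f S hsat).E) (List (DelayGraph G rel f S hsat).E) (List (DelayGraph G rel f S hsat).E) instHAppendOfAppend l l') = @List.flatMap (DelayGraph G rel f S hsat).E β F l ++ @List.flatMap (DelayGraph G rel f S hsat).E β F l' := List.flatMap_append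

end DSimp

section Rho

variable {f : G.E} {S : Set G.E}

/-- Vertex collapse map remembering the source half. -/
def sigL : DV G S → G.V
  | Sum.inl v => v
  | Sum.inr g => G.src g.1

/-- Vertex collapse map remembering the range half. -/
def sigR : DV G S → G.V
  | Sum.inl v => v
  | Sum.inr g => G.rng g.1

/-- Edge collapse (source version). -/
noncomputable def rhoE (hsat : SatHyp G rel f S) : DE G f S → List G.E
  | Sum.inl e => [e.1]
  | Sum.inr (Sum.inl (g, bb)) => if bb then [g.1] else []
  | Sum.inr (Sum.inr x) => [(opp hsat x.1.1 x.2.1 x.1.2 x.2.2.1 x.2.2.2).2]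

/-- Edge collapse (range version). -/
def rbarE : DE G f S → List G.E
  | Sum.inl e => [e.1]
  | Sum.inr (Sum.inl (g, bb)) => if bb then [] else [g.1]
  | Sum.inr (Sum.inr x) => [x.1.2]

theorem rhoE_facts (hP : PreservesRSD G rel) (hsat : SatHyp G rel f S) (ε : DE G f S) :
    G.Composable (sigL ((DelayGraph G rel f S hsat).src ε)) (rhoE hsat ε) ∧
    G.endV (sigL ((DelayGraph G rel f S hsat).src ε)) (rhoE hsat ε)
      = sigL ((DelayGraph G rel f S hsat).rng ε) := by
  rcases ε with ⟨e, he⟩ | (⟨g, bb⟩ | x)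
  · exact ⟨⟨rfl, trivial⟩, rfl⟩
  · cases bb
    · exact ⟨trivial, rfl⟩
    · exact ⟨⟨rfl, trivial⟩, rfl⟩
  · obtain ⟨h1, h2, h3⟩ := opp_src hP hsat x.1.1 x.2.1 x.1.2 x.2.2.1 x.2.2.2
    exact ⟨⟨h1, trivial⟩, h2.symm⟩

theorem rbarE_facts (hP : PreservesRSD G rel) (hsat : SatHyp G rel f S) (ε : DE G f S) :
    G.Composable (sigR ((DelayGraph G rel f S hsat).src ε)) (rbarE ε) ∧
    G.endV (sigR ((DelayGraph G rel f S hsat).src ε)) (rbarE ε)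
      = sigR ((DelayGraph G rel f S hsat).rng ε) := by
  rcases ε with ⟨e, he⟩ | (⟨g, bb⟩ | x)
  · exact ⟨⟨rfl, trivial⟩, rfl⟩
  · cases bb
    · exact ⟨⟨rfl, trivial⟩, rfl⟩
    · exact ⟨trivial, rfl⟩
  · obtain ⟨h1, h2, h3⟩ := opp_src hP hsat x.1.1 x.2.1 x.1.2 x.2.2.1 x.2.2.2
    exact ⟨⟨x.2.2.1, trivial⟩, h3.symm⟩

theorem rho_list (hP : PreservesRSD G rel) (hsat : SatHyp G rel f S) :
    ∀ (l : List (DE G f S)) (s : DV G S),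
      (DelayGraph G rel f S hsat).Composable s l →
      G.Composable (sigL s) (l.flatMap (rhoE hsat)) ∧
      G.endV (sigL s) (l.flatMap (rhoE hsat))
        = sigL ((DelayGraph G rel f S hsat).endV s l) := by
  intro l
  induction l with
  | nil => intro s _; exact ⟨trivial, rfl⟩
  | cons ε l ih =>
    intro s hc
    obtain ⟨h1, h2⟩ := hc
    obtain ⟨c1, e1⟩ := rhoE_facts hP hsat ε
    rw [h1] at c1 e1
    obtain ⟨c2, e2⟩ := ih _ h2
    constructor
    · rw [List.flatMap_cons]
      refine composable_append _ _ _ c1 ?_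
      rw [e1]; exact c2
    · rw [List.flatMap_cons, endV_append, e1]
      exact e2

theorem rbar_list (hP : PreservesRSD G rel) (hsat : SatHyp G rel f S) :
    ∀ (l : List (DE G f S)) (s : DV G S),
      (DelayGraph G rel f S hsat).Composable s l →
      G.Composable (sigR s) (l.flatMap rbarE) ∧
      G.endV (sigR s) (l.flatMap rbarE)
        = sigR ((DelayGraph G rel f S hsat).endV s l) := by
  intro l
  induction l with
  | nil => intro s _; exact ⟨trivial, rfl⟩
  | cons ε l ih =>
    intro s hc
    obtain ⟨h1, h2⟩ := hc
    obtain ⟨c1, e1⟩ := rbarE_facts hP hsat ε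
    rw [h1] at c1 e1
    obtain ⟨c2, e2⟩ := ih _ h2
    constructor
    · rw [List.flatMap_cons]
      refine composable_append _ _ _ c1 ?_
      rw [e1]; exact c2
    · rw [List.flatMap_cons, endV_append, e1]
      exact e2

/-- The source-collapse of a delayed path. -/
noncomputable def rho (hP : PreservesRSD G rel) (hsat : SatHyp G rel f S)
    (p : GPath (DelayGraph G rel f S hsat)) : GPath G :=
  ⟨sigL p.src, p.edges.flatMap (rhoE hsat), (rho_list hP hsat p.edges p.src p.comp).1⟩

/-- The range-collapse of a delayed path. -/
noncomputable def rbar (hP : PreservesRSD G rel) (hsat : SatHyp G rel f S)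
    (p : GPath (DelayGraph G rel f S hsat)) : GPath G :=
  ⟨sigR p.src, p.edges.flatMap rbarE, (rbar_list hP hsat p.edges p.src p.comp).1⟩

theorem rho_rng (hP : PreservesRSD G rel) (hsat : SatHyp G rel f S)
    (p : GPath (DelayGraph G rel f S hsat)) :
    (rho hP hsat p).rng = sigL p.rng :=
  (rho_list hP hsat p.edges p.src p.comp).2

theorem rbar_rng (hP : PreservesRSD G rel) (hsat : SatHyp G rel f S)
    (p : GPath (DelayGraph G rel f S hsat)) :
    (rbar hP hsat p).rng = sigR p.rng :=
  (rbar_list hP hsat p.edges p.src p.comp).2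

theorem rho_append (hP : PreservesRSD G rel) (hsat : SatHyp G rel f S)
    (p q : GPath (DelayGraph G rel f S hsat)) (h : p.rng = q.src) :
    rho hP hsat (p.append q h) = (rho hP hsat p).append (rho hP hsat q)
      ((rho_rng hP hsat p).trans (congrArg sigL h)) := by
  apply GPath.ext'
  · rfl
  · simp [rho, GPath.append]

theorem rbar_append (hP : PreservesRSD G rel) (hsat : SatHyp G rel f S)
    (p q : GPath (DelayGraph G rel f S hsat)) (h : p.rng = q.src) :
    rbar hP hsat (p.append q h) = (rbar hP hsat p).append (rbar hP hsat q)
      ((rbar_rng hP hsat p).trans (congrArg sigR h)) := by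
  apply GPath.ext'
  · rfl
  · simp [rbar, GPath.append]

theorem eq_mk2 {H : ColoredGraph k} (P : GPath H) {ε₁ ε₂ : H.E} (h : P.edges = [ε₁, ε₂]) :
    ∃ (hc : H.src ε₂ = H.rng ε₁),
      P = ⟨H.src ε₁, [ε₁, ε₂], ⟨rfl, hc, trivial⟩⟩ := by
  obtain ⟨s, e, c⟩ := P
  simp only at h
  subst h
  exact ⟨c.2.1, GPath.ext' c.1.symm rfl⟩

theorem eq_mk3 {H : ColoredGraph k} (P : GPath H) {ε₁ ε₂ ε₃ : H.E}
    (h : P.edges = [ε₁, ε₂, ε₃]) :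
    ∃ (hc : H.src ε₂ = H.rng ε₁) (hc' : H.src ε₃ = H.rng ε₂),
      P = ⟨H.src ε₁, [ε₁, ε₂, ε₃], ⟨rfl, hc, hc', trivial⟩⟩ := by
  obtain ⟨s, e, c⟩ := P
  simp only at h
  subst h
  exact ⟨c.2.1, c.2.2.1, GPath.ext' c.1.symm rfl⟩

end Rho

section Master

variable {f : G.E} {S : Set G.E} {hsat : SatHyp G rel f S}

theorem old_facts :
    ∀ {l : List (DE G f S)} {l' : List G.E},
      List.Forall₂ (fun ε e => ∃ h : e ∉ S, ε = DelayOld G f S e h) l l' →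
      ∀ v : G.V, (DelayGraph G rel f S hsat).Composable (Sum.inl v) l →
      G.Composable v l' ∧
      (DelayGraph G rel f S hsat).endV (Sum.inl v) l = Sum.inl (G.endV v l') ∧
      l.map (DelayGraph G rel f S hsat).color = l'.map G.color ∧
      l.flatMap (rhoE hsat) = l' ∧ l.flatMap rbarE = l' := by
  intro l l' hf
  induction hf with
  | nil => intro v _; exact ⟨trivial, rfl, rfl, rfl, rfl⟩
  | @cons ε e l l' h1 h2 ih =>
    intro v hc
    obtain ⟨hnot, rfl⟩ := h1
    have hsrc : G.src e = v := by
      have h0 := hc.1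
      simp only [D_src_old] at h0
      exact Sum.inl.inj h0
    obtain ⟨i1, i2, i3, i4, i5⟩ := ih (G.rng e) hc.2
    refine ⟨⟨hsrc, i1⟩, i2, ?_, ?_, ?_⟩
    · exact congrArg (List.cons (G.color e)) i3
    · simp only [List.flatMap_cons, i4]; rfl
    · simp only [List.flatMap_cons, i5]; rfl

theorem master (hE : Equivalence rel) (hP : PreservesRSD G rel) (hC : KG0 G rel)
    (hU : KG4 G rel) (hScol : ∀ g ∈ S, G.color g = G.color f)
    {p q : GPath (DelayGraph G rel f S hsat)}
    (h : DelayRel G rel f S hsat p q) :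
    p.src = q.src ∧ p.rng = q.rng ∧ p.colors.Perm q.colors ∧
      rel (rho hP hsat p) (rho hP hsat q) ∧ rel (rbar hP hsat p) (rbar hP hsat q) := by
  induction h with
  | old p q p' q' hp hps hq hqs hrel =>
    obtain ⟨f1, f2, f3, f4, f5⟩ := old_facts hp p'.src (hps ▸ p.comp)
    obtain ⟨e1, e2, e3, e4, e5⟩ := old_facts hq q'.src (hqs ▸ q.comp)
    have hps' : p' = ⟨p'.src, p'.edges, p'.comp⟩ := rfl
    refine ⟨?_, ?_, ?_, ?_, ?_⟩
    · rw [hps, hqs, (hP _ _ hrel).1]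
    · show (DelayGraph G rel f S hsat).endV p.src p.edges
          = (DelayGraph G rel f S hsat).endV q.src q.edges
      rw [hps, hqs, f2, e2]
      exact congrArg Sum.inl (hP _ _ hrel).2.1
    · show p.edges.map _ |>.Perm (q.edges.map _)
      rw [f3, e3]
      exact rel_perm hP hrel
    · have r1 : rho hP hsat p = p' := by
        refine GPath.ext' ?_ f4
        show sigL p.src = p'.src
        rw [hps]; rfl
      have r2 : rho hP hsat q = q' := by
        refine GPath.ext' ?_ e4
        show sigL q.src = q'.src
        rw [hqs]; rfl
      rw [r1, r2]; exact hrel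
    · have r1 : rbar hP hsat p = p' := by
        refine GPath.ext' ?_ f5
        show sigR p.src = p'.src
        rw [hps]; rfl
      have r2 : rbar hP hsat q = q' := by
        refine GPath.ext' ?_ e5
        show sigR q.src = q'.src
        rw [hqs]; rfl
      rw [r1, r2]; exact hrel
  | splitTop p q g h a b hg hh hb hcond p' q' hp' hq' hrel hp hq =>
    clear hrel hp' hq'
    obtain ⟨hcp, hpeq⟩ := eq_mk2 p hp
    obtain ⟨hcq, hqeq⟩ := eq_mk2 q hq
    subst hpeq hqeq
    have hval : h = (opp hsat g hcond.1 b hcond.2.1 hcond.2.2).1.1 := by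
      exact congrArg Subtype.val (Sum.inr.inj (by simp at hcq; exact hcq))
    obtain ⟨cp0, cq0, hr0⟩ := opp_spec hP hsat g hcond.1 b hcond.2.1 hcond.2.2
    obtain ⟨o1, o2, o3⟩ := opp_src hP hsat g hcond.1 b hcond.2.1 hcond.2.2
    refine ⟨by rfl, ?_, ?_, ?_, ?_⟩
    · show Sum.inl (G.rng b) = Sum.inl (G.rng h)
      rw [hval, o3]
    · show [_, _].Perm [_, _]
      simp only [D_color_half, D_color_old, D_color_new]
      rw [hScol g hg, hScol h hh]
      exact List.Perm.swap _ _ _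
    · have r1 : rho hP hsat
          ⟨(DelayGraph G rel f S hsat).src (DelayHalf G f S g hg true),
            [DelayHalf G f S g hg true, DelayOld G f S b hb], ⟨rfl, hcp, trivial⟩⟩
          = ⟨G.src g, [g, b], cp0⟩ :=
        GPath.ext' rfl (by simp [DelayGraph, rho, rhoE, DelayHalf, DelayOld])
      have r2 : rho hP hsat
          ⟨(DelayGraph G rel f S hsat).src (DelayNew G f S g b hcond),
            [DelayNew G f S g b hcond, DelayHalf G f S h hh true], ⟨rfl, hcq, trivial⟩⟩
          = ⟨G.src g, [(opp hsat g hcond.1 b hcond.2.1 hcond.2.2).2,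
              (opp hsat g hcond.1 b hcond.2.1 hcond.2.2).1.1], cq0⟩ :=
        GPath.ext' rfl (by simp [DelayGraph, rho, rhoE, DelayHalf, DelayNew, hval])
      rw [r1, r2]; exact hr0
    · have r1 : rbar hP hsat
          ⟨(DelayGraph G rel f S hsat).src (DelayHalf G f S g hg true),
            [DelayHalf G f S g hg true, DelayOld G f S b hb], ⟨rfl, hcp, trivial⟩⟩
          = ⟨G.rng g, [b], ⟨hcond.2.1, trivial⟩⟩ :=
        GPath.ext' rfl (by simp [DelayGraph, rbar, rbarE, DelayHalf, DelayOld])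
      have r2 : rbar hP hsat
          ⟨(DelayGraph G rel f S hsat).src (DelayNew G f S g b hcond),
            [DelayNew G f S g b hcond, DelayHalf G f S h hh true], ⟨rfl, hcq, trivial⟩⟩
          = ⟨G.rng g, [b], ⟨hcond.2.1, trivial⟩⟩ :=
        GPath.ext' rfl (by simp [DelayGraph, rbar, rbarE, DelayHalf, DelayNew])
      rw [r1, r2]
      exact hE.refl _
  | splitBottom p q g h a b hg hh ha hcond p' q' hp' hq' hrel hp hq =>
    obtain ⟨hcp, hpeq⟩ := eq_mk2 p hp
    obtain ⟨hcq, hqeq⟩ := eq_mk2 q hq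
    subst hpeq hqeq
    obtain ⟨hcp', hp'eq⟩ := eq_mk2 p' hp'
    obtain ⟨hcq', hq'eq⟩ := eq_mk2 q' hq'
    subst hp'eq hq'eq
    have hsa : G.src a = G.src g := ((hP _ _ hrel).1).symm
    have hrel2 : rel ⟨G.src g, [g, b], ⟨rfl, hcp', trivial⟩⟩
        ⟨G.src g, [a, h], by rw [← hsa]; exact ⟨rfl, hcq', trivial⟩⟩ := by
      have : (⟨G.src a, [a, h], ⟨rfl, hcq', trivial⟩⟩ : GPath G)
          = ⟨G.src g, [a, h], by rw [← hsa]; exact ⟨rfl, hcq', trivial⟩⟩ :=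
        GPath.ext' hsa rfl
      rw [← this]
      exact hrel
    obtain ⟨hau, hhu⟩ := opp_unique hE hP hScol hU hsat g hcond.1 b hcond.2.1
      hcond.2.2 hh hrel2
    obtain ⟨o1, o2, o3⟩ := opp_src hP hsat g hcond.1 b hcond.2.1 hcond.2.2
    obtain ⟨cp0, cq0, hr0⟩ := opp_spec hP hsat g hcond.1 b hcond.2.1 hcond.2.2
    refine ⟨?_, ?_, ?_, ?_, ?_⟩
    · show Sum.inl (G.src g) = Sum.inl (G.src a)
      rw [hsa]
    · show Sum.inr (opp hsat g hcond.1 b hcond.2.1 hcond.2.2).1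
        = Sum.inr (⟨h, hh⟩ : {x : G.E // x ∈ S})
      exact congrArg Sum.inr (Subtype.ext hhu).symm
    · show [_, _].Perm [_, _]
      simp only [D_color_half, D_color_old, D_color_new]
      have hca : G.color a = G.color b := by
        rw [hau]; exact opp_color hP hScol hsat g hcond.1 b hcond.2.1 hcond.2.2
      rw [hScol g hg, hScol h hh, hca]
      exact List.Perm.swap _ _ _
    · have r1 : rho hP hsat
          ⟨(DelayGraph G rel f S hsat).src (DelayHalf G f S g hg false),
            [DelayHalf G f S g hg false, DelayNew G f S g b hcond], ⟨rfl, hcp, trivial⟩⟩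
          = ⟨G.src g, [(opp hsat g hcond.1 b hcond.2.1 hcond.2.2).2], ⟨o1, trivial⟩⟩ :=
        GPath.ext' rfl (by simp [DelayGraph, rho, rhoE, DelayHalf, DelayNew])
      have r2 : rho hP hsat
          ⟨(DelayGraph G rel f S hsat).src (DelayOld G f S a ha),
            [DelayOld G f S a ha, DelayHalf G f S h hh false], ⟨rfl, hcq, trivial⟩⟩
          = ⟨G.src g, [(opp hsat g hcond.1 b hcond.2.1 hcond.2.2).2], ⟨o1, trivial⟩⟩ :=
        GPath.ext' hsa (by simp [DelayGraph, rho, rhoE, DelayOld, DelayHalf, hau])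
      rw [r1, r2]
      exact hE.refl _
    · have r1 : rbar hP hsat
          ⟨(DelayGraph G rel f S hsat).src (DelayHalf G f S g hg false),
            [DelayHalf G f S g hg false, DelayNew G f S g b hcond], ⟨rfl, hcp, trivial⟩⟩
          = ⟨G.src g, [g, b], ⟨rfl, hcp', trivial⟩⟩ :=
        GPath.ext' rfl (by simp [DelayGraph, rbar, rbarE, DelayHalf, DelayNew])
      have r2 : rbar hP hsat
          ⟨(DelayGraph G rel f S hsat).src (DelayOld G f S a ha),
            [DelayOld G f S a ha, DelayHalf G f S h hh false], ⟨rfl, hcq, trivial⟩⟩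
          = ⟨G.src a, [a, h], ⟨rfl, hcq', trivial⟩⟩ :=
        GPath.ext' rfl (by simp [DelayGraph, rbar, rbarE, DelayOld, DelayHalf])
      rw [r1, r2]
      exact hrel
  | cube p q g₀ g₁ g₃ a b a' b' a₁ b₁ hg₀ hg₁ hg₃ hc₁ hc₂ hc₃ hc₄ P Q u u' w w'
      hP' hQ' hPQ hu hu' huu hw hw' hww hp hq =>
    clear huu hww hu hu' hw hw'
    obtain ⟨hcp, hpeq⟩ := eq_mk2 p hp
    obtain ⟨hcq, hqeq⟩ := eq_mk2 q hq
    subst hpeq hqeq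
    have hval1 : g₁ = (opp hsat g₀ hc₁.1 a hc₁.2.1 hc₁.2.2).1.1 := by
      have h0 := hcp
      simp only [D_src_new, D_rng_new] at h0
      exact congrArg Subtype.val (Sum.inr.inj h0)
    subst hval1
    have hval3 : g₃ = (opp hsat g₀ hc₃.1 b' hc₃.2.1 hc₃.2.2).1.1 := by
      have h0 := hcq
      simp only [D_src_new, D_rng_new] at h0
      exact congrArg Subtype.val (Sum.inr.inj h0)
    subst hval3
    obtain ⟨hP1, hP2, hPeq⟩ := eq_mk3 P hP'
    obtain ⟨hQ1, hQ2, hQeq⟩ := eq_mk3 Q hQ'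
    subst hPeq hQeq
    obtain ⟨cA0p, cA0q, rA0⟩ := opp_spec hP hsat g₀ hc₁.1 a hc₁.2.1 hc₁.2.2
    obtain ⟨oA01, oA02, oA03⟩ := opp_src hP hsat g₀ hc₁.1 a hc₁.2.1 hc₁.2.2
    obtain ⟨cA1p, cA1q, rA1⟩ := opp_spec hP hsat (opp hsat g₀ hc₁.1 a hc₁.2.1 hc₁.2.2).1.1 hc₂.1 b hc₂.2.1 hc₂.2.2
    obtain ⟨oA11, oA12, oA13⟩ := opp_src hP hsat (opp hsat g₀ hc₁.1 a hc₁.2.1 hc₁.2.2).1.1 hc₂.1 b hc₂.2.1 hc₂.2.2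
    obtain ⟨cB0p, cB0q, rB0⟩ := opp_spec hP hsat g₀ hc₃.1 b' hc₃.2.1 hc₃.2.2
    obtain ⟨oB01, oB02, oB03⟩ := opp_src hP hsat g₀ hc₃.1 b' hc₃.2.1 hc₃.2.2
    obtain ⟨cB1p, cB1q, rB1⟩ := opp_spec hP hsat (opp hsat g₀ hc₃.1 b' hc₃.2.1 hc₃.2.2).1.1 hc₄.1 a' hc₄.2.1 hc₄.2.2
    obtain ⟨oB11, oB12, oB13⟩ := opp_src hP hsat (opp hsat g₀ hc₃.1 b' hc₃.2.1 hc₃.2.2).1.1 hc₄.1 a' hc₄.2.1 hc₄.2.2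
    have cT : G.Composable (G.src g₀) [(opp hsat g₀ hc₁.1 a hc₁.2.1 hc₁.2.2).2, (opp hsat (opp hsat g₀ hc₁.1 a hc₁.2.1 hc₁.2.2).1.1 hc₂.1 b hc₂.2.1 hc₂.2.2).2, (opp hsat (opp hsat g₀ hc₁.1 a hc₁.2.1 hc₁.2.2).1.1 hc₂.1 b hc₂.2.1 hc₂.2.2).1.1] :=
      ⟨oA01, oA11.trans oA02, oA12, trivial⟩
    have cT' : G.Composable (G.src g₀) [(opp hsat g₀ hc₃.1 b' hc₃.2.1 hc₃.2.2).2, (opp hsat (opp hsat g₀ hc₃.1 b' hc₃.2.1 hc₃.2.2).1.1 hc₄.1 a' hc₄.2.1 hc₄.2.2).2, (opp hsat (opp hsat g₀ hc₃.1 b' hc₃.2.1 hc₃.2.2).1.1 hc₄.1 a' hc₄.2.1 hc₄.2.2).1.1] :=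
      ⟨oB01, oB11.trans oB02, oB12, trivial⟩
    have cM : G.Composable (G.src g₀) [(opp hsat g₀ hc₁.1 a hc₁.2.1 hc₁.2.2).2, (opp hsat g₀ hc₁.1 a hc₁.2.1 hc₁.2.2).1.1, b] :=
      ⟨oA01, oA02, hc₂.2.1, trivial⟩
    have cM' : G.Composable (G.src g₀) [(opp hsat g₀ hc₃.1 b' hc₃.2.1 hc₃.2.2).2, (opp hsat g₀ hc₃.1 b' hc₃.2.1 hc₃.2.2).1.1, a'] :=
      ⟨oB01, oB02, hc₄.2.1, trivial⟩
    have step1 : rel ⟨G.src g₀, [g₀, a, b], ⟨rfl, hP1, hP2, trivial⟩⟩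
        ⟨G.src g₀, [(opp hsat g₀ hc₁.1 a hc₁.2.1 hc₁.2.2).2, (opp hsat g₀ hc₁.1 a hc₁.2.1 hc₁.2.2).1.1, b], cM⟩ := by
      have d1 : (⟨G.src g₀, [g₀, a, b], ⟨rfl, hP1, hP2, trivial⟩⟩ : GPath G)
          = GPath.append ⟨G.src g₀, [g₀, a], ⟨rfl, hP1, trivial⟩⟩ (edgePath G b) hP2.symm :=
        GPath.ext' rfl rfl
      have d2 : (⟨G.src g₀, [(opp hsat g₀ hc₁.1 a hc₁.2.1 hc₁.2.2).2, (opp hsat g₀ hc₁.1 a hc₁.2.1 hc₁.2.2).1.1, b], cM⟩ : GPath G)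
          = GPath.append ⟨G.src g₀, [(opp hsat g₀ hc₁.1 a hc₁.2.1 hc₁.2.2).2, (opp hsat g₀ hc₁.1 a hc₁.2.1 hc₁.2.2).1.1], cA0q⟩ (edgePath G b)
              (hc₂.2.1.symm) :=
        GPath.ext' rfl rfl
      rw [d1, d2]
      exact hC _ _ _ _ _ _ rA0 (hE.refl _)
    have step2 : rel ⟨G.src g₀, [(opp hsat g₀ hc₁.1 a hc₁.2.1 hc₁.2.2).2, (opp hsat g₀ hc₁.1 a hc₁.2.1 hc₁.2.2).1.1, b], cM⟩
        ⟨G.src g₀, [(opp hsat g₀ hc₁.1 a hc₁.2.1 hc₁.2.2).2, (opp hsat (opp hsat g₀ hc₁.1 a hc₁.2.1 hc₁.2.2).1.1 hc₂.1 b hc₂.2.1 hc₂.2.2).2, (opp hsat (opp hsat g₀ hc₁.1 a hc₁.2.1 hc₁.2.2).1.1 hc₂.1 b hc₂.2.1 hc₂.2.2).1.1], cT⟩ := by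
      have d3 : (⟨G.src g₀, [(opp hsat g₀ hc₁.1 a hc₁.2.1 hc₁.2.2).2, (opp hsat g₀ hc₁.1 a hc₁.2.1 hc₁.2.2).1.1, b], cM⟩ : GPath G)
          = (edgePath G (opp hsat g₀ hc₁.1 a hc₁.2.1 hc₁.2.2).2).append ⟨G.src (opp hsat g₀ hc₁.1 a hc₁.2.1 hc₁.2.2).1.1, [(opp hsat g₀ hc₁.1 a hc₁.2.1 hc₁.2.2).1.1, b], cA1p⟩ oA02.symm :=
        GPath.ext' oA01.symm rfl
      have d4 : (⟨G.src g₀, [(opp hsat g₀ hc₁.1 a hc₁.2.1 hc₁.2.2).2, (opp hsat (opp hsat g₀ hc₁.1 a hc₁.2.1 hc₁.2.2).1.1 hc₂.1 b hc₂.2.1 hc₂.2.2).2, (opp hsat (opp hsat g₀ hc₁.1 a hc₁.2.1 hc₁.2.2).1.1 hc₂.1 b hc₂.2.1 hc₂.2.2).1.1], cT⟩ : GPath G)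
          = (edgePath G (opp hsat g₀ hc₁.1 a hc₁.2.1 hc₁.2.2).2).append ⟨G.src (opp hsat g₀ hc₁.1 a hc₁.2.1 hc₁.2.2).1.1, [(opp hsat (opp hsat g₀ hc₁.1 a hc₁.2.1 hc₁.2.2).1.1 hc₂.1 b hc₂.2.1 hc₂.2.2).2, (opp hsat (opp hsat g₀ hc₁.1 a hc₁.2.1 hc₁.2.2).1.1 hc₂.1 b hc₂.2.1 hc₂.2.2).1.1], cA1q⟩ oA02.symm :=
        GPath.ext' oA01.symm rfl
      rw [d3, d4]
      exact hC _ _ _ _ _ _ (hE.refl _) rA1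
    have step1' : rel ⟨G.src g₀, [g₀, b', a'], ⟨rfl, hQ1, hQ2, trivial⟩⟩
        ⟨G.src g₀, [(opp hsat g₀ hc₃.1 b' hc₃.2.1 hc₃.2.2).2, (opp hsat g₀ hc₃.1 b' hc₃.2.1 hc₃.2.2).1.1, a'], cM'⟩ := by
      have d1 : (⟨G.src g₀, [g₀, b', a'], ⟨rfl, hQ1, hQ2, trivial⟩⟩ : GPath G)
          = GPath.append ⟨G.src g₀, [g₀, b'], ⟨rfl, hQ1, trivial⟩⟩ (edgePath G a') hQ2.symm :=
        GPath.ext' rfl rfl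
      have d2 : (⟨G.src g₀, [(opp hsat g₀ hc₃.1 b' hc₃.2.1 hc₃.2.2).2, (opp hsat g₀ hc₃.1 b' hc₃.2.1 hc₃.2.2).1.1, a'], cM'⟩ : GPath G)
          = GPath.append ⟨G.src g₀, [(opp hsat g₀ hc₃.1 b' hc₃.2.1 hc₃.2.2).2, (opp hsat g₀ hc₃.1 b' hc₃.2.1 hc₃.2.2).1.1], cB0q⟩ (edgePath G a')
              (hc₄.2.1.symm) :=
        GPath.ext' rfl rfl
      rw [d1, d2]
      exact hC _ _ _ _ _ _ rB0 (hE.refl _)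
    have step2' : rel ⟨G.src g₀, [(opp hsat g₀ hc₃.1 b' hc₃.2.1 hc₃.2.2).2, (opp hsat g₀ hc₃.1 b' hc₃.2.1 hc₃.2.2).1.1, a'], cM'⟩
        ⟨G.src g₀, [(opp hsat g₀ hc₃.1 b' hc₃.2.1 hc₃.2.2).2, (opp hsat (opp hsat g₀ hc₃.1 b' hc₃.2.1 hc₃.2.2).1.1 hc₄.1 a' hc₄.2.1 hc₄.2.2).2, (opp hsat (opp hsat g₀ hc₃.1 b' hc₃.2.1 hc₃.2.2).1.1 hc₄.1 a' hc₄.2.1 hc₄.2.2).1.1], cT'⟩ := by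
      have d3 : (⟨G.src g₀, [(opp hsat g₀ hc₃.1 b' hc₃.2.1 hc₃.2.2).2, (opp hsat g₀ hc₃.1 b' hc₃.2.1 hc₃.2.2).1.1, a'], cM'⟩ : GPath G)
          = (edgePath G (opp hsat g₀ hc₃.1 b' hc₃.2.1 hc₃.2.2).2).append ⟨G.src (opp hsat g₀ hc₃.1 b' hc₃.2.1 hc₃.2.2).1.1, [(opp hsat g₀ hc₃.1 b' hc₃.2.1 hc₃.2.2).1.1, a'], cB1p⟩ oB02.symm :=
        GPath.ext' oB01.symm rfl
      have d4 : (⟨G.src g₀, [(opp hsat g₀ hc₃.1 b' hc₃.2.1 hc₃.2.2).2, (opp hsat (opp hsat g₀ hc₃.1 b' hc₃.2.1 hc₃.2.2).1.1 hc₄.1 a' hc₄.2.1 hc₄.2.2).2, (opp hsat (opp hsat g₀ hc₃.1 b' hc₃.2.1 hc₃.2.2).1.1 hc₄.1 a' hc₄.2.1 hc₄.2.2).1.1], cT'⟩ : GPath G)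
          = (edgePath G (opp hsat g₀ hc₃.1 b' hc₃.2.1 hc₃.2.2).2).append ⟨G.src (opp hsat g₀ hc₃.1 b' hc₃.2.1 hc₃.2.2).1.1, [(opp hsat (opp hsat g₀ hc₃.1 b' hc₃.2.1 hc₃.2.2).1.1 hc₄.1 a' hc₄.2.1 hc₄.2.2).2, (opp hsat (opp hsat g₀ hc₃.1 b' hc₃.2.1 hc₃.2.2).1.1 hc₄.1 a' hc₄.2.1 hc₄.2.2).1.1], cB1q⟩ oB02.symm :=
        GPath.ext' oB01.symm rfl
      rw [d3, d4]
      exact hC _ _ _ _ _ _ (hE.refl _) rB1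
    have relTT' : rel ⟨G.src g₀, [(opp hsat g₀ hc₁.1 a hc₁.2.1 hc₁.2.2).2, (opp hsat (opp hsat g₀ hc₁.1 a hc₁.2.1 hc₁.2.2).1.1 hc₂.1 b hc₂.2.1 hc₂.2.2).2] ++ [(opp hsat (opp hsat g₀ hc₁.1 a hc₁.2.1 hc₁.2.2).1.1 hc₂.1 b hc₂.2.1 hc₂.2.2).1.1], cT⟩
        ⟨G.src g₀, [(opp hsat g₀ hc₃.1 b' hc₃.2.1 hc₃.2.2).2, (opp hsat (opp hsat g₀ hc₃.1 b' hc₃.2.1 hc₃.2.2).1.1 hc₄.1 a' hc₄.2.1 hc₄.2.2).2] ++ [(opp hsat (opp hsat g₀ hc₃.1 b' hc₃.2.1 hc₃.2.2).1.1 hc₄.1 a' hc₄.2.1 hc₄.2.2).1.1], cT'⟩ := by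
      refine rel_congr (hE.trans (hE.symm (hE.trans step1 step2))
        (hE.trans hPQ (hE.trans step1' step2'))) ?_ ?_
      · exact GPath.ext' rfl rfl
      · exact GPath.ext' rfl rfl
    obtain ⟨hlast, hrelU⟩ := lastEdge hE hP hC hU relTT'
      (by rw [hScol _ (opp hsat (opp hsat g₀ hc₁.1 a hc₁.2.1 hc₁.2.2).1.1 hc₂.1 b hc₂.2.1 hc₂.2.2).1.2, hScol _ (opp hsat (opp hsat g₀ hc₃.1 b' hc₃.2.1 hc₃.2.2).1.1 hc₄.1 a' hc₄.2.1 hc₄.2.2).1.2])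
    have rbtail := (firstEdge hE hP hC hU hPQ rfl).2
    refine ⟨by rfl, ?_, ?_, ?_, ?_⟩
    · show Sum.inr (opp hsat (opp hsat g₀ hc₁.1 a hc₁.2.1 hc₁.2.2).1.1 hc₂.1 b hc₂.2.1 hc₂.2.2).1 = Sum.inr (opp hsat (opp hsat g₀ hc₃.1 b' hc₃.2.1 hc₃.2.2).1.1 hc₄.1 a' hc₄.2.1 hc₄.2.2).1
      exact congrArg Sum.inr (Subtype.ext hlast)
    · have hcol := rel_perm hP rbtail
      simpa [GPath.colors, DelayGraph, DelayNew] using hcol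
    · refine rel_congr hrelU (GPath.ext' rfl ?_) (GPath.ext' rfl ?_)
      · simp [DelayGraph, rho, rhoE, DelayNew]
      · simp [DelayGraph, rho, rhoE, DelayNew]
    · refine rel_congr rbtail (GPath.ext' rfl ?_) (GPath.ext' rfl ?_)
      · simp [DelayGraph, rbar, rbarE, DelayNew]
      · simp [DelayGraph, rbar, rbarE, DelayNew]
  | refl p => exact ⟨rfl, rfl, List.Perm.refl _, hE.refl _, hE.refl _⟩
  | symm p q h ih =>
    exact ⟨ih.1.symm, ih.2.1.symm, ih.2.2.1.symm, hE.symm ih.2.2.2.1, hE.symm ih.2.2.2.2⟩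
  | trans p q r h1 h2 ih1 ih2 =>
    exact ⟨ih1.1.trans ih2.1, ih1.2.1.trans ih2.2.1, ih1.2.2.1.trans ih2.2.2.1,
      hE.trans ih1.2.2.2.1 ih2.2.2.2.1, hE.trans ih1.2.2.2.2 ih2.2.2.2.2⟩
  | concat p₁ p₂ q₁ q₂ hglue hglue' h1 h2 ih1 ih2 =>
    refine ⟨ih1.1, ?_, ?_, ?_, ?_⟩
    · rw [rng_append, rng_append]; exact ih2.2.1
    · rw [colors_append, colors_append]; exact ih1.2.2.1.append ih2.2.2.1
    · rw [rho_append, rho_append]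
      exact hC _ _ _ _ _ _ ih1.2.2.2.1 ih2.2.2.2.1
    · rw [rbar_append, rbar_append]
      exact hC _ _ _ _ _ _ ih1.2.2.2.2 ih2.2.2.2.2

end Master


section Inj

variable {f : G.E} {S : Set G.E} {hsat : SatHyp G rel f S}

theorem cancel_prefix (hE : Equivalence rel) (hP : PreservesRSD G rel) (hC : KG0 G rel)
    (hU : KG4 G rel) :
    ∀ (u : List G.E) (s : G.V) (l m : List G.E)
      (c₁ : G.Composable s (u ++ l)) (c₂ : G.Composable s (u ++ m)),
      rel ⟨s, u ++ l, c₁⟩ ⟨s, u ++ m, c₂⟩ →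
      rel ⟨G.endV s u, l, composable_right u s l c₁⟩
          ⟨G.endV s u, m, composable_right u s m c₂⟩ := by
  intro u
  induction u with
  | nil => intro s l m c₁ c₂ h; exact h
  | cons e u ih =>
    intro s l m c₁ c₂ h
    exact ih _ _ _ _ _ (firstEdge hE hP hC hU h rfl).2

theorem headEq (hE : Equivalence rel) (hP : PreservesRSD G rel) (hC : KG0 G rel)
    (hU : KG4 G rel) (hScol : ∀ g ∈ S, G.color g = G.color f)
    (ε₁ ε₂ : DE G f S) (t₁ t₂ : List (DE G f S)) (s : DV G S)
    (hs₁ : (DelayGraph G rel f S hsat).src ε₁ = s)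
    (hs₂ : (DelayGraph G rel f S hsat).src ε₂ = s)
    (hcolh : (DelayGraph G rel f S hsat).color ε₁ = (DelayGraph G rel f S hsat).color ε₂)
    {d₁ : G.Composable (sigL s) ((ε₁ :: t₁).flatMap (rhoE hsat))}
    {d₂ : G.Composable (sigL s) ((ε₂ :: t₂).flatMap (rhoE hsat))}
    (hrho : rel ⟨sigL s, (ε₁ :: t₁).flatMap (rhoE hsat), d₁⟩
              ⟨sigL s, (ε₂ :: t₂).flatMap (rhoE hsat), d₂⟩)
    {e₁ : G.Composable (sigR s) ((ε₁ :: t₁).flatMap rbarE)}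
    {e₂ : G.Composable (sigR s) ((ε₂ :: t₂).flatMap rbarE)}
    (hrbar : rel ⟨sigR s, (ε₁ :: t₁).flatMap rbarE, e₁⟩
               ⟨sigR s, (ε₂ :: t₂).flatMap rbarE, e₂⟩) : ε₁ = ε₂ := by
  have hs := hs₁.trans hs₂.symm
  rcases ε₁ with ⟨e1, he1⟩ | (⟨⟨g1, hg1⟩, bb1⟩ | ⟨⟨g1, b1⟩, hx1⟩) <;>
    rcases ε₂ with ⟨e2, he2⟩ | (⟨⟨g2, hg2⟩, bb2⟩ | ⟨⟨g2, b2⟩, hx2⟩)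
  · -- old / old
    have hx₁ : ((Sum.inl ⟨e1, he1⟩ :: t₁).flatMap (rhoE hsat))
        = e1 :: t₁.flatMap (rhoE hsat) := by simp [rhoE]
    have hx₂ : ((Sum.inl ⟨e2, he2⟩ :: t₂).flatMap (rhoE hsat))
        = e2 :: t₂.flatMap (rhoE hsat) := by simp [rhoE]
    have d₁' : G.Composable (sigL s) (e1 :: t₁.flatMap (rhoE hsat)) := by
      rw [← hx₁]; exact d₁
    have d₂' : G.Composable (sigL s) (e2 :: t₂.flatMap (rhoE hsat)) := by
      rw [← hx₂]; exact d₂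
    have h' : rel ⟨sigL s, e1 :: t₁.flatMap (rhoE hsat), d₁'⟩
        ⟨sigL s, e2 :: t₂.flatMap (rhoE hsat), d₂'⟩ :=
      rel_congr hrho (GPath.ext' rfl hx₁) (GPath.ext' rfl hx₂)
    have hcc : G.color e1 = G.color e2 := by simpa using hcolh
    have := (firstEdge hE hP hC hU h' hcc).1
    subst this
    rfl
  · -- old / half
    cases bb2 with
    | false =>
      have hx₁ : ((Sum.inl ⟨e1, he1⟩ :: t₁).flatMap rbarE)
          = e1 :: t₁.flatMap rbarE := by simp [rbarE]
      have hx₂ : ((Sum.inr (Sum.inl (⟨g2, hg2⟩, false)) :: t₂).flatMap rbarE)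
          = g2 :: t₂.flatMap rbarE := by simp [rbarE]
      have e₁' : G.Composable (sigR s) (e1 :: t₁.flatMap rbarE) := by
        rw [← hx₁]; exact e₁
      have e₂' : G.Composable (sigR s) (g2 :: t₂.flatMap rbarE) := by
        rw [← hx₂]; exact e₂
      have h' : rel ⟨sigR s, e1 :: t₁.flatMap rbarE, e₁'⟩
          ⟨sigR s, g2 :: t₂.flatMap rbarE, e₂'⟩ :=
        rel_congr hrbar (GPath.ext' rfl hx₁) (GPath.ext' rfl hx₂)
      have hcc : G.color e1 = G.color g2 := by simpa using hcolh
      have heq := (firstEdge hE hP hC hU h' hcc).1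
      exact absurd (heq ▸ hg2) he1
    | true => simp at hs
  · -- old / new
    simp at hs
  · -- half / old
    cases bb1 with
    | false =>
      have hx₁ : ((Sum.inr (Sum.inl (⟨g1, hg1⟩, false)) :: t₁).flatMap rbarE)
          = g1 :: t₁.flatMap rbarE := by simp [rbarE]
      have hx₂ : ((Sum.inl ⟨e2, he2⟩ :: t₂).flatMap rbarE)
          = e2 :: t₂.flatMap rbarE := by simp [rbarE]
      have e₁' : G.Composable (sigR s) (g1 :: t₁.flatMap rbarE) := by
        rw [← hx₁]; exact e₁
      have e₂' : G.Composable (sigR s) (e2 :: t₂.flatMap rbarE) := by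
        rw [← hx₂]; exact e₂
      have h' : rel ⟨sigR s, g1 :: t₁.flatMap rbarE, e₁'⟩
          ⟨sigR s, e2 :: t₂.flatMap rbarE, e₂'⟩ :=
        rel_congr hrbar (GPath.ext' rfl hx₁) (GPath.ext' rfl hx₂)
      have hcc : G.color g1 = G.color e2 := by simpa using hcolh
      have heq := (firstEdge hE hP hC hU h' hcc).1
      exact absurd (heq ▸ hg1) he2
    | true => simp at hs
  · -- half / half
    cases bb1 with
    | false =>
      cases bb2 with
      | false =>
        have hx₁ : ((Sum.inr (Sum.inl (⟨g1, hg1⟩, false)) :: t₁).flatMap rbarE)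
            = g1 :: t₁.flatMap rbarE := by simp [rbarE]
        have hx₂ : ((Sum.inr (Sum.inl (⟨g2, hg2⟩, false)) :: t₂).flatMap rbarE)
            = g2 :: t₂.flatMap rbarE := by simp [rbarE]
        have e₁' : G.Composable (sigR s) (g1 :: t₁.flatMap rbarE) := by
          rw [← hx₁]; exact e₁
        have e₂' : G.Composable (sigR s) (g2 :: t₂.flatMap rbarE) := by
          rw [← hx₂]; exact e₂
        have h' : rel ⟨sigR s, g1 :: t₁.flatMap rbarE, e₁'⟩
            ⟨sigR s, g2 :: t₂.flatMap rbarE, e₂'⟩ :=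
          rel_congr hrbar (GPath.ext' rfl hx₁) (GPath.ext' rfl hx₂)
        have hcc : G.color g1 = G.color g2 := by simpa using hcolh
        have heq := (firstEdge hE hP hC hU h' hcc).1
        subst heq
        rfl
      | true => simp at hs
    | true =>
      cases bb2 with
      | false => simp at hs
      | true =>
        have hgg : g1 = g2 := congrArg Subtype.val (Sum.inr.inj hs)
        subst hgg
        rfl
  · -- half / new
    cases bb1 with
    | false => simp at hs
    | true =>
      simp only [D_color_inrH, D_color_inrN] at hcolh
      exact absurd (hcolh.symm.trans (hScol g1 hg1)) hx2.2.2
  · -- new / old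
    simp at hs
  · -- new / half
    cases bb2 with
    | false => simp at hs
    | true =>
      simp only [D_color_inrH, D_color_inrN] at hcolh
      exact absurd (hcolh.trans (hScol g2 hg2)) hx1.2.2
  · -- new / new
    have hg : g1 = g2 := congrArg Subtype.val (Sum.inr.inj hs)
    subst hg
    have hx₁ : ((Sum.inr (Sum.inr ⟨(g1, b1), hx1⟩) :: t₁).flatMap rbarE)
        = b1 :: t₁.flatMap rbarE := by simp [rbarE]
    have hx₂ : ((Sum.inr (Sum.inr ⟨(g1, b2), hx2⟩) :: t₂).flatMap rbarE)
        = b2 :: t₂.flatMap rbarE := by simp [rbarE]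
    have e₁' : G.Composable (sigR s) (b1 :: t₁.flatMap rbarE) := by
      rw [← hx₁]; exact e₁
    have e₂' : G.Composable (sigR s) (b2 :: t₂.flatMap rbarE) := by
      rw [← hx₂]; exact e₂
    have h' : rel ⟨sigR s, b1 :: t₁.flatMap rbarE, e₁'⟩
        ⟨sigR s, b2 :: t₂.flatMap rbarE, e₂'⟩ :=
      rel_congr hrbar (GPath.ext' rfl hx₁) (GPath.ext' rfl hx₂)
    have hcc : G.color b1 = G.color b2 := by simpa using hcolh
    have heq := (firstEdge hE hP hC hU h' hcc).1
    subst heq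
    rfl

theorem inj_lemma (hE : Equivalence rel) (hP : PreservesRSD G rel) (hC : KG0 G rel)
    (hU : KG4 G rel) (hScol : ∀ g ∈ S, G.color g = G.color f) :
    ∀ (l₁ : List (DE G f S)) (s : DV G S) (l₂ : List (DE G f S))
      (c₁ : (DelayGraph G rel f S hsat).Composable s l₁)
      (c₂ : (DelayGraph G rel f S hsat).Composable s l₂),
      l₁.map (DelayGraph G rel f S hsat).color
        = l₂.map (DelayGraph G rel f S hsat).color →
      ∀ (d₁ : G.Composable (sigL s) (l₁.flatMap (rhoE hsat)))
        (d₂ : G.Composable (sigL s) (l₂.flatMap (rhoE hsat)))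
        (e₁ : G.Composable (sigR s) (l₁.flatMap rbarE))
        (e₂ : G.Composable (sigR s) (l₂.flatMap rbarE)),
      rel ⟨sigL s, l₁.flatMap (rhoE hsat), d₁⟩ ⟨sigL s, l₂.flatMap (rhoE hsat), d₂⟩ →
      rel ⟨sigR s, l₁.flatMap rbarE, e₁⟩ ⟨sigR s, l₂.flatMap rbarE, e₂⟩ →
      l₁ = l₂ := by
  intro l₁
  induction l₁ with
  | nil =>
    intro s l₂ c₁ c₂ hcol d₁ d₂ e₁ e₂ hrho hrbar
    cases l₂ with
    | nil => rfl
    | cons ε₂ t₂ => simp at hcol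
  | cons ε₁ t₁ ih =>
    intro s l₂ c₁ c₂ hcol d₁ d₂ e₁ e₂ hrho hrbar
    cases l₂ with
    | nil => simp at hcol
    | cons ε₂ t₂ =>
      simp only [List.map_cons, DL_map_cons_GD, List.cons.injEq] at hcol
      obtain ⟨hcolh, hcolt⟩ := hcol
      have hhead : ε₁ = ε₂ :=
        headEq hE hP hC hU hScol ε₁ ε₂ t₁ t₂ s c₁.1 c₂.1 hcolh hrho hrbar
      subst hhead
      -- cancel the common head on both collapses
      have hx₁ : ((ε₁ :: t₁).flatMap (rhoE hsat))
          = rhoE hsat ε₁ ++ t₁.flatMap (rhoE hsat) := List.flatMap_cons ..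
      have hx₂ : ((ε₁ :: t₂).flatMap (rhoE hsat))
          = rhoE hsat ε₁ ++ t₂.flatMap (rhoE hsat) := List.flatMap_cons ..
      have d₁' : G.Composable (sigL s) (rhoE hsat ε₁ ++ t₁.flatMap (rhoE hsat)) := by
        rw [← hx₁]; exact d₁
      have d₂' : G.Composable (sigL s) (rhoE hsat ε₁ ++ t₂.flatMap (rhoE hsat)) := by
        rw [← hx₂]; exact d₂
      have hrho' : rel ⟨sigL s, rhoE hsat ε₁ ++ t₁.flatMap (rhoE hsat), d₁'⟩
          ⟨sigL s, rhoE hsat ε₁ ++ t₂.flatMap (rhoE hsat), d₂'⟩ :=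
        rel_congr hrho (GPath.ext' rfl hx₁) (GPath.ext' rfl hx₂)
      have hcanc := cancel_prefix hE hP hC hU (rhoE hsat ε₁) (sigL s) _ _ d₁' d₂' hrho'
      have hend : G.endV (sigL s) (rhoE hsat ε₁)
          = sigL ((DelayGraph G rel f S hsat).rng ε₁) := by
        have h0 := (rhoE_facts hP hsat ε₁).2
        rw [c₁.1] at h0
        exact h0
      have hrhoT : rel ⟨sigL ((DelayGraph G rel f S hsat).rng ε₁),
            t₁.flatMap (rhoE hsat), (rho_list hP hsat t₁ _ c₁.2).1⟩
          ⟨sigL ((DelayGraph G rel f S hsat).rng ε₁),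
            t₂.flatMap (rhoE hsat), (rho_list hP hsat t₂ _ c₂.2).1⟩ :=
        rel_congr hcanc (GPath.ext' hend rfl) (GPath.ext' hend rfl)
      have hy₁ : ((ε₁ :: t₁).flatMap rbarE) = rbarE ε₁ ++ t₁.flatMap rbarE :=
        List.flatMap_cons ..
      have hy₂ : ((ε₁ :: t₂).flatMap rbarE) = rbarE ε₁ ++ t₂.flatMap rbarE :=
        List.flatMap_cons ..
      have e₁' : G.Composable (sigR s) (rbarE ε₁ ++ t₁.flatMap rbarE) := by
        rw [← hy₁]; exact e₁
      have e₂' : G.Composable (sigR s) (rbarE ε₁ ++ t₂.flatMap rbarE) := by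
        rw [← hy₂]; exact e₂
      have hrbar' : rel ⟨sigR s, rbarE ε₁ ++ t₁.flatMap rbarE, e₁'⟩
          ⟨sigR s, rbarE ε₁ ++ t₂.flatMap rbarE, e₂'⟩ :=
        rel_congr hrbar (GPath.ext' rfl hy₁) (GPath.ext' rfl hy₂)
      have hcanc' := cancel_prefix hE hP hC hU (rbarE ε₁) (sigR s) _ _ e₁' e₂' hrbar'
      have hend' : G.endV (sigR s) (rbarE ε₁)
          = sigR ((DelayGraph G rel f S hsat).rng ε₁) := by
        have h0 := (rbarE_facts hP hsat ε₁).2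
        rw [c₁.1] at h0
        exact h0
      have hrbarT : rel ⟨sigR ((DelayGraph G rel f S hsat).rng ε₁),
            t₁.flatMap rbarE, (rbar_list hP hsat t₁ _ c₁.2).1⟩
          ⟨sigR ((DelayGraph G rel f S hsat).rng ε₁),
            t₂.flatMap rbarE, (rbar_list hP hsat t₂ _ c₂.2).1⟩ :=
        rel_congr hcanc' (GPath.ext' hend' rfl) (GPath.ext' hend' rfl)
      have := ih ((DelayGraph G rel f S hsat).rng ε₁) t₂ c₁.2 c₂.2 hcolt
        _ _ _ _ hrhoT hrbarT
      rw [this]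

end Inj


section Exists

variable {f : G.E} {S : Set G.E} {hsat : SatHyp G rel f S}

theorem pair_swap (hE : Equivalence rel) (hP : PreservesRSD G rel) (hC : KG0 G rel)
    (hU : KG4 G rel) (hScol : ∀ g ∈ S, G.color g = G.color f)
    (hclosed : SqClosed G rel f S) (ε₁ ε₂ : DE G f S)
    (hglue : (DelayGraph G rel f S hsat).src ε₂ = (DelayGraph G rel f S hsat).rng ε₁)
    (hne : (DelayGraph G rel f S hsat).color ε₁ ≠ (DelayGraph G rel f S hsat).color ε₂) :
    ∃ Q : GPath (DelayGraph G rel f S hsat),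
      DelayRel G rel f S hsat Q
        ⟨(DelayGraph G rel f S hsat).src ε₁, [ε₁, ε₂], ⟨rfl, hglue, trivial⟩⟩ ∧
      Q.colors = [(DelayGraph G rel f S hsat).color ε₂,
        (DelayGraph G rel f S hsat).color ε₁] := by
  rcases ε₁ with ⟨e1, he1⟩ | (⟨⟨g1, hg1⟩, bb1⟩ | ⟨⟨g1, b1⟩, hx1⟩)
  · rcases ε₂ with ⟨e2, he2⟩ | (⟨⟨g2, hg2⟩, bb2⟩ | ⟨⟨g2, b2⟩, hx2⟩)
    · -- old / old
      have hs : G.src e2 = G.rng e1 := Sum.inl.inj hglue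
      have c : G.Composable (G.src e1) [e1, e2] := ⟨rfl, hs, trivial⟩
      obtain ⟨f₁, f₂, c', sw, hcf1, hcf2⟩ := swap2 hP hU c
      have hnecol : G.color e1 ≠ G.color e2 := hne
      have hmem : f₁ ∉ S ∧ f₂ ∉ S := by
        by_cases hce2 : G.color e2 = G.color f
        · have hce1 : G.color e1 ≠ G.color f := fun h => hnecol (h.trans hce2.symm)
          constructor
          · intro hf
            exact he2 (hclosed f₁ hf e2 f₂ e1 ⟨G.src e1, [f₁, f₂], c'⟩
              ⟨G.src e1, [e1, e2], c⟩ hcf2 (by rw [hcf2]; exact hce1) hce2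
              (Or.inl ⟨rfl, rfl⟩) sw)
          · intro hf
            exact hce1 (hcf2.symm.trans (hScol f₂ hf))
        · constructor
          · intro hf
            exact hce2 (hcf1.symm.trans (hScol f₁ hf))
          · intro hf
            by_cases hce1 : G.color e1 = G.color f
            · exact he1 (hclosed f₂ hf e1 f₁ e2 ⟨G.src e1, [f₁, f₂], c'⟩
                ⟨G.src e1, [e1, e2], c⟩ hcf1 (by rw [hcf1]; exact hce2) hce1
                (Or.inr ⟨rfl, rfl⟩) sw)
            · exact hce1 (hcf2.symm.trans (hScol f₂ hf))
      refine ⟨⟨Sum.inl (G.src e1), [DelayOld G f S f₁ hmem.1, DelayOld G f S f₂ hmem.2],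
        ⟨congrArg Sum.inl c'.1, congrArg Sum.inl c'.2.1, trivial⟩⟩, ?_, ?_⟩
      · exact DelayRel.old _ _ ⟨G.src e1, [f₁, f₂], c'⟩ ⟨G.src e1, [e1, e2], c⟩
          (List.Forall₂.cons ⟨hmem.1, rfl⟩ (List.Forall₂.cons ⟨hmem.2, rfl⟩ List.Forall₂.nil))
          rfl
          (List.Forall₂.cons ⟨he1, rfl⟩ (List.Forall₂.cons ⟨he2, rfl⟩ List.Forall₂.nil))
          rfl sw
      · simp [DelayGraph, GPath.colors, DelayOld, hcf1, hcf2]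
    · -- old / half
      cases bb2 with
      | false =>
        have hs : G.src g2 = G.rng e1 := Sum.inl.inj hglue
        have c : G.Composable (G.src e1) [e1, g2] := ⟨rfl, hs, trivial⟩
        obtain ⟨f₁, f₂, c', sw, hcf1, hcf2⟩ := swap2 hP hU c
        have hce1 : G.color e1 ≠ G.color f := fun h =>
          hne (h.trans (hScol g2 hg2).symm)
        have hf₁S : f₁ ∈ S := hclosed g2 hg2 f₁ e1 f₂ ⟨G.src e1, [e1, g2], c⟩
          ⟨G.src e1, [f₁, f₂], c'⟩ hcf2.symm hce1 (hcf1.trans (hScol g2 hg2))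
          (Or.inr ⟨rfl, rfl⟩) (hE.symm sw)
        have hcond : f₁ ∈ S ∧ G.src f₂ = G.rng f₁ ∧ G.color f₂ ≠ G.color f :=
          ⟨hf₁S, c'.2.1, by rw [hcf2]; exact hce1⟩
        refine ⟨⟨Sum.inl (G.src e1), [DelayHalf G f S f₁ hf₁S false,
            DelayNew G f S f₁ f₂ hcond], ⟨congrArg Sum.inl c'.1, rfl, trivial⟩⟩, ?_, ?_⟩
        · exact DelayRel.splitBottom _ _ f₁ g2 e1 f₂ hf₁S hg2 he1 hcond
            ⟨G.src e1, [f₁, f₂], c'⟩ ⟨G.src e1, [e1, g2], c⟩ rfl rfl sw rfl rfl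
        · simp [DelayGraph, GPath.colors, DelayHalf, DelayNew, hcf1, hcf2]
      | true => simp at hglue
    · -- old / new
      simp at hglue
  · rcases ε₂ with ⟨e2, he2⟩ | (⟨⟨g2, hg2⟩, bb2⟩ | ⟨⟨g2, b2⟩, hx2⟩)
    · -- half / old
      cases bb1 with
      | false => simp at hglue
      | true =>
        have hs : G.src e2 = G.rng g1 := Sum.inl.inj hglue
        have hce2 : G.color e2 ≠ G.color f := fun h =>
          hne ((hScol g1 hg1).trans h.symm)
        obtain ⟨cp0, cq0, r0⟩ := opp_spec hP hsat g1 hg1 e2 hs hce2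
        refine ⟨⟨Sum.inr ⟨g1, hg1⟩, [DelayNew G f S g1 e2 ⟨hg1, hs, hce2⟩,
            DelayHalf G f S (opp hsat g1 hg1 e2 hs hce2).1.1 (opp hsat g1 hg1 e2 hs hce2).1.2 true], ⟨rfl, rfl, trivial⟩⟩, ?_, ?_⟩
        · exact DelayRel.symm _ _ (DelayRel.splitTop _ _ g1 (opp hsat g1 hg1 e2 hs hce2).1.1 (opp hsat g1 hg1 e2 hs hce2).2 e2
            hg1 (opp hsat g1 hg1 e2 hs hce2).1.2 he2 ⟨hg1, hs, hce2⟩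
            ⟨G.src g1, [g1, e2], cp0⟩ ⟨G.src g1, [(opp hsat g1 hg1 e2 hs hce2).2, (opp hsat g1 hg1 e2 hs hce2).1.1], cq0⟩
            rfl rfl r0 rfl rfl)
        · simp [DelayGraph, GPath.colors, DelayHalf, DelayNew, hScol _ (opp hsat g1 hg1 e2 hs hce2).1.2, hScol g1 hg1]
    · -- half / half
      cases bb1 with
      | false =>
        cases bb2 with
        | false => simp at hglue
        | true => exact absurd ((hScol g1 hg1).trans (hScol g2 hg2).symm) hne
      | true =>
        cases bb2 with
        | false => exact absurd ((hScol g1 hg1).trans (hScol g2 hg2).symm) hne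
        | true => simp at hglue
    · -- half / new
      cases bb1 with
      | false =>
        have hgg : g2 = g1 := congrArg Subtype.val (Sum.inr.inj hglue)
        subst hgg
        obtain ⟨cp0, cq0, r0⟩ := opp_spec hP hsat g2 hx2.1 b2 hx2.2.1 hx2.2.2
        obtain ⟨o1, o2, o3⟩ := opp_src hP hsat g2 hx2.1 b2 hx2.2.1 hx2.2.2
        have hA2 : (opp hsat g2 hx2.1 b2 hx2.2.1 hx2.2.2).2 ∉ S := fun hm => hx2.2.2
          ((opp_color hP hScol hsat g2 hx2.1 b2 hx2.2.1 hx2.2.2).symm.trans (hScol _ hm))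
        refine ⟨⟨Sum.inl (G.src g2), [DelayOld G f S (opp hsat g2 hx2.1 b2 hx2.2.1 hx2.2.2).2 hA2,
            DelayHalf G f S (opp hsat g2 hx2.1 b2 hx2.2.1 hx2.2.2).1.1 (opp hsat g2 hx2.1 b2 hx2.2.1 hx2.2.2).1.2 false],
            ⟨congrArg Sum.inl o1, congrArg Sum.inl o2, trivial⟩⟩, ?_, ?_⟩
        · exact DelayRel.symm _ _ (DelayRel.splitBottom _ _ g2 (opp hsat g2 hx2.1 b2 hx2.2.1 hx2.2.2).1.1 (opp hsat g2 hx2.1 b2 hx2.2.1 hx2.2.2).2 b2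
            hg1 (opp hsat g2 hx2.1 b2 hx2.2.1 hx2.2.2).1.2 hA2 hx2
            ⟨G.src g2, [g2, b2], cp0⟩ ⟨G.src g2, [(opp hsat g2 hx2.1 b2 hx2.2.1 hx2.2.2).2, (opp hsat g2 hx2.1 b2 hx2.2.1 hx2.2.2).1.1], cq0⟩
            rfl rfl r0 rfl rfl)
        · simp [DelayGraph, GPath.colors, DelayHalf, DelayOld,
            opp_color hP hScol hsat g2 hx2.1 b2 hx2.2.1 hx2.2.2, hScol g2 hg1,
            hScol _ (opp hsat g2 hx2.1 b2 hx2.2.1 hx2.2.2).1.2]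
      | true => simp at hglue
  · rcases ε₂ with ⟨e2, he2⟩ | (⟨⟨g2, hg2⟩, bb2⟩ | ⟨⟨g2, b2⟩, hx2⟩)
    · -- new / old
      simp at hglue
    · -- new / half
      cases bb2 with
      | false => simp at hglue
      | true =>
        have hgv : g2 = (opp hsat g1 hx1.1 b1 hx1.2.1 hx1.2.2).1.1 := congrArg Subtype.val (Sum.inr.inj hglue)
        subst hgv
        obtain ⟨cp0, cq0, r0⟩ := opp_spec hP hsat g1 hx1.1 b1 hx1.2.1 hx1.2.2
        have hb1 : b1 ∉ S := fun hm => hx1.2.2 (hScol _ hm)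
        refine ⟨⟨Sum.inr ⟨g1, hx1.1⟩, [DelayHalf G f S g1 hx1.1 true,
            DelayOld G f S b1 hb1], ⟨rfl, congrArg Sum.inl hx1.2.1, trivial⟩⟩, ?_, ?_⟩
        · exact DelayRel.splitTop _ _ g1 (opp hsat g1 hx1.1 b1 hx1.2.1 hx1.2.2).1.1 (opp hsat g1 hx1.1 b1 hx1.2.1 hx1.2.2).2 b1 hx1.1 hg2 hb1 hx1
            ⟨G.src g1, [g1, b1], cp0⟩ ⟨G.src g1, [(opp hsat g1 hx1.1 b1 hx1.2.1 hx1.2.2).2, (opp hsat g1 hx1.1 b1 hx1.2.1 hx1.2.2).1.1], cq0⟩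
            rfl rfl r0 rfl rfl
        · simp [DelayGraph, GPath.colors, DelayHalf, DelayOld, hScol _ hg2, hScol g1 hx1.1]
    · -- new / new : the cube
      have hgv : g2 = (opp hsat g1 hx1.1 b1 hx1.2.1 hx1.2.2).1.1 := congrArg Subtype.val (Sum.inr.inj hglue)
      subst hgv
      obtain ⟨cA0p, cA0q, rA0⟩ := opp_spec hP hsat g1 hx1.1 b1 hx1.2.1 hx1.2.2
      obtain ⟨oA01, oA02, oA03⟩ := opp_src hP hsat g1 hx1.1 b1 hx1.2.1 hx1.2.2
      have hsb2 : G.src b2 = G.rng b1 := hx2.2.1.trans oA03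
      have cab : G.Composable (G.rng g1) [b1, b2] := ⟨hx1.2.1, hsb2, trivial⟩
      obtain ⟨w1, w2, c', sw, hcw1, hcw2⟩ := swap2 hP hU cab
      have hc₃ : g1 ∈ S ∧ G.src w1 = G.rng g1 ∧ G.color w1 ≠ G.color f :=
        ⟨hx1.1, c'.1, by rw [hcw1]; exact hx2.2.2⟩
      obtain ⟨cB0p, cB0q, rB0⟩ := opp_spec hP hsat g1 hc₃.1 w1 hc₃.2.1 hc₃.2.2
      obtain ⟨oB01, oB02, oB03⟩ := opp_src hP hsat g1 hc₃.1 w1 hc₃.2.1 hc₃.2.2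
      have hc₄ : (opp hsat g1 hc₃.1 w1 hc₃.2.1 hc₃.2.2).1.1 ∈ S ∧ G.src w2 = G.rng (opp hsat g1 hc₃.1 w1 hc₃.2.1 hc₃.2.2).1.1 ∧ G.color w2 ≠ G.color f :=
        ⟨(opp hsat g1 hc₃.1 w1 hc₃.2.1 hc₃.2.2).1.2, c'.2.1.trans oB03.symm, by rw [hcw2]; exact hx1.2.2⟩
      have cP : G.Composable (G.src g1) [g1, b1, b2] := ⟨rfl, hx1.2.1, hsb2, trivial⟩
      have cQ' : G.Composable (G.src g1) [g1, w1, w2] := ⟨rfl, c'.1, c'.2.1, trivial⟩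
      have hPQ : rel ⟨G.src g1, [g1, b1, b2], cP⟩ ⟨G.src g1, [g1, w1, w2], cQ'⟩ := by
        have d1 : (⟨G.src g1, [g1, b1, b2], cP⟩ : GPath G)
            = (edgePath G g1).append ⟨G.rng g1, [b1, b2], cab⟩ rfl := GPath.ext' rfl rfl
        have d2 : (⟨G.src g1, [g1, w1, w2], cQ'⟩ : GPath G)
            = (edgePath G g1).append ⟨G.rng g1, [w1, w2], c'⟩ rfl := GPath.ext' rfl rfl
        rw [d1, d2]
        exact hC _ _ _ _ _ _ (hE.refl _) (hE.symm sw)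
      refine ⟨⟨Sum.inr ⟨g1, hx1.1⟩, [DelayNew G f S g1 w1 hc₃,
          DelayNew G f S (opp hsat g1 hc₃.1 w1 hc₃.2.1 hc₃.2.2).1.1 w2 hc₄], ⟨rfl, rfl, trivial⟩⟩, ?_, ?_⟩
      · exact DelayRel.symm _ _ (DelayRel.cube _ _ g1 (opp hsat g1 hx1.1 b1 hx1.2.1 hx1.2.2).1.1 (opp hsat g1 hc₃.1 w1 hc₃.2.1 hc₃.2.2).1.1 b1 b2 w2 w1
          (opp hsat g1 hx1.1 b1 hx1.2.1 hx1.2.2).2 (opp hsat g1 hc₃.1 w1 hc₃.2.1 hc₃.2.2).2 hx1.1 hx2.1 hc₄.1 hx1 hx2 hc₃ hc₄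
          ⟨G.src g1, [g1, b1, b2], cP⟩ ⟨G.src g1, [g1, w1, w2], cQ'⟩
          ⟨G.src g1, [g1, b1], cA0p⟩ ⟨G.src g1, [(opp hsat g1 hx1.1 b1 hx1.2.1 hx1.2.2).2, (opp hsat g1 hx1.1 b1 hx1.2.1 hx1.2.2).1.1], cA0q⟩
          ⟨G.src g1, [g1, w1], cB0p⟩ ⟨G.src g1, [(opp hsat g1 hc₃.1 w1 hc₃.2.1 hc₃.2.2).2, (opp hsat g1 hc₃.1 w1 hc₃.2.1 hc₃.2.2).1.1], cB0q⟩
          rfl rfl hPQ rfl rfl rA0 rfl rfl rB0 rfl rfl)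
      · simp [DelayGraph, GPath.colors, DelayNew, hcw1, hcw2]

theorem exists_colors (hE : Equivalence rel) (hP : PreservesRSD G rel) (hC : KG0 G rel)
    (hU : KG4 G rel) (hScol : ∀ g ∈ S, G.color g = G.color f)
    (hclosed : SqClosed G rel f S) :
    ∀ {c d : List (Fin k)}, c.Perm d →
      ∀ p : GPath (DelayGraph G rel f S hsat), p.colors = d →
      ∃ q, DelayRel G rel f S hsat q p ∧ q.colors = c := by
  intro c d hperm
  induction hperm with
  | nil => intro p hd; exact ⟨p, DelayRel.refl p, hd⟩
  | @cons x c' d' h ih =>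
    intro p hd
    obtain ⟨s, l, cp⟩ := p
    cases l with
    | nil => simp [GPath.colors] at hd
    | cons ε t =>
      simp only [GPath.colors, List.map_cons, List.cons.injEq] at hd
      obtain ⟨hx, hd'⟩ := hd
      obtain ⟨q', hq'rel, hq'col⟩ := ih ⟨(DelayGraph G rel f S hsat).rng ε, t, cp.2⟩ hd'
      have hsrc : q'.src = (DelayGraph G rel f S hsat).rng ε :=
        (master hE hP hC hU hScol hq'rel).1
      refine ⟨(edgePath (DelayGraph G rel f S hsat) ε).append q' hsrc.symm, ?_, ?_⟩
      · rw [cons_decomp s ε t cp]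
        exact DelayRel.concat _ _ _ _ _ _ (DelayRel.refl _) hq'rel
      · rw [colors_append (edgePath (DelayGraph G rel f S hsat) ε) q' hsrc.symm]
        have he : (edgePath (DelayGraph G rel f S hsat) ε).colors = [x] := by
          simp [GPath.colors, edgePath, hx]
        rw [he, hq'col]
        rfl
  | swap x y l' =>
    intro p hd
    obtain ⟨s, le, cp⟩ := p
    cases le with
    | nil => simp [GPath.colors] at hd
    | cons ε₁ rest =>
      cases rest with
      | nil => simp [GPath.colors] at hd
      | cons ε₂ t =>
        simp only [GPath.colors, List.map_cons, List.cons.injEq] at hd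
        obtain ⟨h1, h2, h3⟩ := hd
        by_cases hxy : x = y
        · subst hxy
          exact ⟨⟨s, ε₁ :: ε₂ :: t, cp⟩, DelayRel.refl _,
            by simp [GPath.colors, h1, h2, h3]⟩
        · have hne : (DelayGraph G rel f S hsat).color ε₁
              ≠ (DelayGraph G rel f S hsat).color ε₂ := by
            rw [h1, h2]; exact hxy
          obtain ⟨Q, hQrel, hQcol⟩ := pair_swap hE hP hC hU hScol hclosed ε₁ ε₂
            cp.2.1 hne
          have hQrng : Q.rng = (DelayGraph G rel f S hsat).rng ε₂ :=
            (master hE hP hC hU hScol hQrel).2.1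
          have hdec : (⟨s, ε₁ :: ε₂ :: t, cp⟩ : GPath (DelayGraph G rel f S hsat))
              = GPath.append ⟨(DelayGraph G rel f S hsat).src ε₁, [ε₁, ε₂],
                  ⟨rfl, cp.2.1, trivial⟩⟩
                ⟨(DelayGraph G rel f S hsat).rng ε₂, t, cp.2.2⟩ rfl :=
            GPath.ext' cp.1.symm rfl
          refine ⟨Q.append ⟨(DelayGraph G rel f S hsat).rng ε₂, t, cp.2.2⟩ hQrng, ?_, ?_⟩
          · rw [hdec]
            exact DelayRel.concat _ _ _ _ _ _ hQrel (DelayRel.refl _)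
          · rw [colors_append, hQcol]
            simp [GPath.colors, h1, h2, h3]
  | trans h1 h2 ih1 ih2 =>
    intro p hd
    obtain ⟨q'', hrel'', hcol''⟩ := ih2 p hd
    obtain ⟨q, hrel, hcol⟩ := ih1 q'' hcol''
    exact ⟨q, DelayRel.trans _ _ _ hrel hrel'', hcol⟩

end Exists

end DelayProof

/-- Delaying a row-finite source-free `k`-graph at the edge `f` (with `S` the
saturated set of edges generated by `f`) yields a row-finite source-free
`k`-graph. -/
theorem delay_is_kgraph {k : ℕ} (G : ColoredGraph k) (rel : GPath G → GPath G → Prop)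
    (hK : IsKGraphRel G rel) (hsf : SourceFree G) (hrf : RowFinite G)
    (f : G.E) (S : Set G.E) (hfS : f ∈ S) (hScol : ∀ g ∈ S, G.color g = G.color f)
    (hclosed : SqClosed G rel f S)
    (hmin : ∀ T : Set G.E, f ∈ T → SqClosed G rel f T → S ⊆ T)
    (hsat : SatHyp G rel f S) :
    IsKGraphRel (DelayGraph G rel f S hsat) (DelayRel G rel f S hsat) ∧
      SourceFree (DelayGraph G rel f S hsat) ∧
      RowFinite (DelayGraph G rel f S hsat) := by
  obtain ⟨hEq, hPr, hCc, hUu⟩ := hK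
  refine ⟨⟨?_, ?_, ?_, ?_⟩, ?_, ?_⟩
  · exact ⟨fun p => DelayRel.refl p, fun h => DelayRel.symm _ _ h,
      fun h h' => DelayRel.trans _ _ _ h h'⟩
  · intro p q h
    have m := master hEq hPr hCc hUu hScol h
    exact ⟨m.1, m.2.1, funext fun i => m.2.2.1.count_eq i⟩
  · intro p₁ p₂ q₁ q₂ h h' r1 r2
    exact DelayRel.concat _ _ _ _ h h' r1 r2
  · intro p c hperm
    obtain ⟨q, hqrel, hqcol⟩ := exists_colors hEq hPr hCc hUu hScol hclosed hperm p rfl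
    refine ⟨q, ⟨hqrel, hqcol⟩, ?_⟩
    rintro q' ⟨hq'rel, hq'col⟩
    have hrel2 := DelayRel.trans _ _ _ hq'rel (DelayRel.symm _ _ hqrel)
    have m := master hEq hPr hCc hUu hScol hrel2
    obtain ⟨s1, l1, c1⟩ := q'
    obtain ⟨s2, l2, c2⟩ := q
    have hs : s1 = s2 := m.1
    subst hs
    have hcols : l1.map (DelayGraph G rel f S hsat).color
        = l2.map (DelayGraph G rel f S hsat).color := hq'col.trans hqcol.symm
    have hedges := inj_lemma hEq hPr hCc hUu hScol l1 s1 l2 c1 c2 hcols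
      _ _ _ _ m.2.2.2.1 m.2.2.2.2
    exact GPath.ext' rfl hedges
  · -- SourceFree
    intro v i
    rcases v with v | ⟨g, hg⟩
    · obtain ⟨e, he1, he2⟩ := hsf v i
      by_cases hmem : e ∈ S
      · refine ⟨DelayHalf G f S e hmem true, ?_, he2⟩
        show Sum.inl (G.rng e) = Sum.inl v
        rw [he1]
      · refine ⟨DelayOld G f S e hmem, ?_, he2⟩
        show Sum.inl (G.rng e) = Sum.inl v
        rw [he1]
    · by_cases hif : i = G.color f
      · refine ⟨DelayHalf G f S g hg false, rfl, ?_⟩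
        show G.color g = i
        rw [hScol g hg, hif]
      · obtain ⟨a, ha1, ha2⟩ := hsf (G.src g) i
        have c : G.Composable (G.src a) [a, g] := ⟨rfl, ha1.symm, trivial⟩
        obtain ⟨f₁, f₂, c', sw, hcf1, hcf2⟩ := swap2 hPr hUu c
        have hai : G.color a ≠ G.color f := by rw [ha2]; exact hif
        have hf₁S : f₁ ∈ S := hclosed g hg f₁ a f₂ ⟨G.src a, [a, g], c⟩
          ⟨G.src a, [f₁, f₂], c'⟩ hcf2.symm hai (hcf1.trans (hScol g hg))
          (Or.inr ⟨rfl, rfl⟩) (hEq.symm sw)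
        have hcond : f₁ ∈ S ∧ G.src f₂ = G.rng f₁ ∧ G.color f₂ ≠ G.color f :=
          ⟨hf₁S, c'.2.1, by rw [hcf2]; exact hai⟩
        obtain ⟨hau, hgu⟩ := opp_unique hEq hPr hScol hUu hsat f₁ hf₁S f₂
          hcond.2.1 hcond.2.2 hg sw
        refine ⟨DelayNew G f S f₁ f₂ hcond, ?_, ?_⟩
        · show Sum.inr (opp hsat f₁ hcond.1 f₂ hcond.2.1 hcond.2.2).1
            = Sum.inr (⟨g, hg⟩ : {x : G.E // x ∈ S})
          exact congrArg Sum.inr (Subtype.ext hgu.symm)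
        · show G.color f₂ = i
          rw [hcf2, ha2]
  · -- RowFinite
    intro v i
    rcases v with v | ⟨g, hg⟩
    · refine Set.Finite.of_finite_image (f := fun ε : DE G f S =>
        match ε with
        | Sum.inl e => e.1
        | Sum.inr (Sum.inl (g', _)) => g'.1
        | Sum.inr (Sum.inr x) => x.1.2) ?_ ?_
      · refine Set.Finite.subset (hrf v i) ?_
        rintro y ⟨ε, ⟨h1, h2⟩, rfl⟩
        rcases ε with ⟨e, he⟩ | (⟨g', bb⟩ | x)
        · exact ⟨Sum.inl.inj h1, h2⟩
        · cases bb
          · simp at h1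
          · exact ⟨Sum.inl.inj h1, h2⟩
        · simp at h1
      · rintro ε₁ ⟨h11, h12⟩ ε₂ ⟨h21, h22⟩ heq
        rcases ε₁ with ⟨e1, he1⟩ | (⟨g1', bb1⟩ | x1)
        · rcases ε₂ with ⟨e2, he2⟩ | (⟨g2', bb2⟩ | x2)
          · have : e1 = e2 := heq
            subst this
            rfl
          · cases bb2
            · simp at h21
            · have : e1 = g2'.1 := heq
              exact absurd (this ▸ g2'.2) he1
          · simp at h21
        · cases bb1
          · simp at h11
          · rcases ε₂ with ⟨e2, he2⟩ | (⟨g2', bb2⟩ | x2)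
            · have : g1'.1 = e2 := heq
              exact absurd (this ▸ g1'.2) he2
            · cases bb2
              · simp at h21
              · have : g1' = g2' := Subtype.ext heq
                rw [this]
            · simp at h21
        · simp at h11
    · by_cases hif : i = G.color f
      · subst hif
        refine Set.Finite.subset (Set.finite_singleton (DelayHalf G f S g hg false)) ?_
        rintro ε ⟨h1, h2⟩
        rcases ε with ⟨e, he⟩ | (⟨g', bb⟩ | x)
        · simp at h1
        · cases bb
          · have : g' = ⟨g, hg⟩ := Sum.inr.inj h1
            subst this
            rfl
          · simp at h1
        · exact absurd h2 x.2.2.2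
      · refine Set.Finite.of_finite_image (f := fun ε : DE G f S =>
          match ε with
          | Sum.inr (Sum.inr x) => (opp hsat x.1.1 x.2.1 x.1.2 x.2.2.1 x.2.2.2).2
          | _ => f) ?_ ?_
        · refine Set.Finite.subset (hrf (G.src g) i) ?_
          rintro y ⟨ε, ⟨h1, h2⟩, rfl⟩
          rcases ε with ⟨e, he⟩ | (⟨g', bb⟩ | ⟨⟨gx, bx⟩, hx⟩)
          · simp at h1
          · cases bb
            · exact absurd (h2.symm.trans (hScol g'.1 g'.2)) hif
            · simp at h1
          · have hgx : (opp hsat gx hx.1 bx hx.2.1 hx.2.2).1.1 = g := congrArg Subtype.val (Sum.inr.inj h1)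
            obtain ⟨o1, o2, o3⟩ := opp_src hPr hsat gx hx.1 bx hx.2.1 hx.2.2
            constructor
            · show G.rng (opp hsat gx hx.1 bx hx.2.1 hx.2.2).2 = G.src g
              rw [← o2, hgx]
            · show G.color (opp hsat gx hx.1 bx hx.2.1 hx.2.2).2 = i
              rw [opp_color hPr hScol hsat gx hx.1 bx hx.2.1 hx.2.2]
              exact h2
        · rintro ε₁ ⟨h11, h12⟩ ε₂ ⟨h21, h22⟩ heq
          rcases ε₁ with ⟨e1, he1⟩ | (⟨g1', bb1⟩ | ⟨⟨gx, bx⟩, hx⟩)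
          · simp at h11
          · cases bb1
            · exact absurd (h12.symm.trans (hScol g1'.1 g1'.2)) hif
            · simp at h11
          · rcases ε₂ with ⟨e2, he2⟩ | (⟨g2', bb2⟩ | ⟨⟨gy, by'⟩, hy⟩)
            · simp at h21
            · cases bb2
              · exact absurd (h22.symm.trans (hScol g2'.1 g2'.2)) hif
              · simp at h21
            · -- both new: uniqueness of the square through (a, g)
              have heq' : (opp hsat gx hx.1 bx hx.2.1 hx.2.2).2 = (opp hsat gy hy.1 by' hy.2.1 hy.2.2).2 := heq
              have hgx : (opp hsat gx hx.1 bx hx.2.1 hx.2.2).1.1 = g := congrArg Subtype.val (Sum.inr.inj h11)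
              have hgy : (opp hsat gy hy.1 by' hy.2.1 hy.2.2).1.1 = g := congrArg Subtype.val (Sum.inr.inj h21)
              obtain ⟨cpx, cqx, rx⟩ := opp_spec hPr hsat gx hx.1 bx hx.2.1 hx.2.2
              obtain ⟨cpy, cqy, ry⟩ := opp_spec hPr hsat gy hy.1 by' hy.2.1 hy.2.2
              obtain ⟨ox1, ox2, ox3⟩ := opp_src hPr hsat gx hx.1 bx hx.2.1 hx.2.2
              obtain ⟨oy1, oy2, oy3⟩ := opp_src hPr hsat gy hy.1 by' hy.2.1 hy.2.2
              have cT : G.Composable (G.src (opp hsat gx hx.1 bx hx.2.1 hx.2.2).2) [(opp hsat gx hx.1 bx hx.2.1 hx.2.2).2, g] := by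
                refine ⟨rfl, ?_, trivial⟩
                rw [← hgx]
                exact ox2
              have rx2 : rel ⟨G.src (opp hsat gx hx.1 bx hx.2.1 hx.2.2).2, [gx, bx], by rw [ox1]; exact cpx⟩
                  ⟨G.src (opp hsat gx hx.1 bx hx.2.1 hx.2.2).2, [(opp hsat gx hx.1 bx hx.2.1 hx.2.2).2, g], cT⟩ :=
                rel_congr rx (GPath.ext' ox1.symm rfl)
                  (GPath.ext' ox1.symm
                    (by show [(opp hsat gx hx.1 bx hx.2.1 hx.2.2).2, (opp hsat gx hx.1 bx hx.2.1 hx.2.2).1.1] = [(opp hsat gx hx.1 bx hx.2.1 hx.2.2).2, g]; rw [hgx]))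
              have ry2 : rel ⟨G.src (opp hsat gx hx.1 bx hx.2.1 hx.2.2).2, [gy, by'], by rw [heq', oy1]; exact cpy⟩
                  ⟨G.src (opp hsat gx hx.1 bx hx.2.1 hx.2.2).2, [(opp hsat gx hx.1 bx hx.2.1 hx.2.2).2, g], cT⟩ :=
                rel_congr ry
                  (GPath.ext'
                    (by show G.src gy = G.src (opp hsat gx hx.1 bx hx.2.1 hx.2.2).2; rw [← oy1, ← heq']) rfl)
                  (GPath.ext'
                    (by show G.src gy = G.src (opp hsat gx hx.1 bx hx.2.1 hx.2.2).2; rw [← oy1, ← heq'])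
                    (by show [(opp hsat gy hy.1 by' hy.2.1 hy.2.2).2, (opp hsat gy hy.1 by' hy.2.1 hy.2.2).1.1] = [(opp hsat gx hx.1 bx hx.2.1 hx.2.2).2, g]; rw [hgy, ← heq']))
              have hperm : ([G.color f, i] : List (Fin k)).Perm
                  ((⟨G.src (opp hsat gx hx.1 bx hx.2.1 hx.2.2).2, [(opp hsat gx hx.1 bx hx.2.1 hx.2.2).2, g], cT⟩ : GPath G).colors) := by
                have hca : G.color (opp hsat gx hx.1 bx hx.2.1 hx.2.2).2 = i := by
                  rw [opp_color hPr hScol hsat gx hx.1 bx hx.2.1 hx.2.2]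
                  exact h12
                have : (⟨G.src (opp hsat gx hx.1 bx hx.2.1 hx.2.2).2, [(opp hsat gx hx.1 bx hx.2.1 hx.2.2).2, g], cT⟩ : GPath G).colors
                    = [i, G.color f] := by
                  simp [GPath.colors, hca, hScol g hg]
                rw [this]
                exact List.Perm.swap _ _ _
              obtain ⟨r, -, hun⟩ := hUu ⟨G.src (opp hsat gx hx.1 bx hx.2.1 hx.2.2).2, [(opp hsat gx hx.1 bx hx.2.1 hx.2.2).2, g], cT⟩
                [G.color f, i] hperm
              have hPeq : (⟨G.src (opp hsat gx hx.1 bx hx.2.1 hx.2.2).2, [gx, bx], by rw [ox1]; exact cpx⟩ : GPath G)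
                  = ⟨G.src (opp hsat gx hx.1 bx hx.2.1 hx.2.2).2, [gy, by'], by rw [heq', oy1]; exact cpy⟩ := by
                refine (hun _ ⟨rx2, ?_⟩).trans (hun _ ⟨ry2, ?_⟩).symm
                · simp [GPath.colors, hScol gx hx.1]
                  exact h12
                · simp [GPath.colors, hScol gy hy.1]
                  exact h22
              have hed : [gx, bx] = [gy, by'] := congrArg GPath.edges hPeq
              simp only [List.cons.injEq] at hed
              obtain ⟨hgg, hbb, -⟩ := hed
              subst hgg
              subst hbb
              rfl


end ColoredGraph
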